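/- arXiv:0802.1227 — 7 statements merged into one kernel-verified Lean document; each statement's English description precedes it below -/
import Mathlib

section
/- Let ν be the measure on ℝ^ℓ = ℝ^{ℓ-1} × ℝ given by dν(H', H_ℓ) = e^{2c H_ℓ} dH' dH_ℓ for a constant c > 0. Let p ∈ L¹(ℝ^{ℓ-1}) and define σ(H', H_ℓ) = e^{-2c H_ℓ} p(H'). Then the convolution operator Sf = f *_{ℝ^ℓ} σ is bounded from L¹(ν) to weak-L¹(ν); more precisely, for all f ∈ L¹(ν) and t > 0, ν({H : |Sf(H)| > t}) ≤ (1/(2c t)) · ‖p‖_{L¹(ℝ^{ℓ-1})} · ‖f‖_{L¹(ν)}. -/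
open MeasureTheory Real Set


lemma indicator_comp_mul_left {c β : ℝ} (hc : 0 < c) :
    (fun x => ((Iic (c * β)).indicator Real.exp) (c * x))
      = (Iic β).indicator (fun x => Real.exp (c * x)) := by
  funext x
  by_cases hx : x ≤ β
  · rw [Set.indicator_of_mem (by simpa using (mul_le_mul_iff_right₀ hc).mpr hx),
      Set.indicator_of_mem (by simpa using hx)]
  · rw [Set.indicator_of_notMem, Set.indicator_of_notMem (by simpa using hx)]
    simp only [mem_Iic, not_le] at hx ⊢
    exact (mul_lt_mul_iff_right₀ hc).mpr hx

lemma exp_mul_integrableOn {c β : ℝ} (hc : 0 < c) :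
    IntegrableOn (fun x => Real.exp (c * x)) (Iic β) := by
  have h1 : Integrable ((Iic (c * β)).indicator Real.exp) volume :=
    (integrable_indicator_iff measurableSet_Iic).mpr (integrableOn_exp_Iic _)
  have h2 : Integrable (fun x => ((Iic (c * β)).indicator Real.exp) (c * x)) volume :=
    (integrable_comp_mul_left_iff _ hc.ne').mpr h1
  rw [indicator_comp_mul_left hc] at h2
  exact (integrable_indicator_iff measurableSet_Iic).mp h2

lemma exp_mul_integral_Iic {c : ℝ} (β : ℝ) (hc : 0 < c) :
    ∫ x in Iic β, Real.exp (c * x) = c⁻¹ * Real.exp (c * β) := by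
  have := Measure.integral_comp_mul_left ((Iic (c * β)).indicator Real.exp) c
  rw [indicator_comp_mul_left hc] at this
  rw [← integral_indicator measurableSet_Iic, this, integral_indicator measurableSet_Iic,
    integral_exp_Iic, abs_of_pos (inv_pos.mpr hc), smul_eq_mul]

lemma fiber_bound {c t : ℝ} (hc : 0 < c) (ht : 0 < t) (ψ : ENNReal) :
    ∫⁻ b in {b : ℝ | ENNReal.ofReal (t * Real.exp (2 * c * b)) < ψ},
      ENNReal.ofReal (Real.exp (2 * c * b)) ≤ ψ / ENNReal.ofReal (2 * c * t) := by
  have h2c : (0:ℝ) < 2 * c := by linarith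
  have h2ct : (0:ℝ) < 2 * c * t := by positivity
  rcases eq_or_ne ψ ⊤ with hψ | hψ
  · rw [hψ, ENNReal.top_div_of_ne_top (by simp)]
    exact le_top
  set ψr := ψ.toReal with hψr
  have hψeq : ψ = ENNReal.ofReal ψr := (ENNReal.ofReal_toReal hψ).symm
  rcases le_or_gt ψr 0 with hψ0 | hψ0
  · have : {b : ℝ | ENNReal.ofReal (t * Real.exp (2 * c * b)) < ψ} = ∅ := by
      ext b
      simp only [mem_setOf_eq, mem_empty_iff_false, iff_false, not_lt, hψeq]
      exact le_trans (by simp [ENNReal.ofReal_eq_zero.mpr hψ0]) zero_le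
    rw [this, Measure.restrict_empty, lintegral_zero_measure]
    exact zero_le
  set β := Real.log (ψr / t) / (2 * c) with hβ
  have hsub : {b : ℝ | ENNReal.ofReal (t * Real.exp (2 * c * b)) < ψ} ⊆ Iic β := by
    intro b hb
    simp only [mem_setOf_eq, hψeq] at hb
    have h1 : t * Real.exp (2 * c * b) < ψr :=
      (ENNReal.ofReal_lt_ofReal_iff_of_nonneg (by positivity)).mp hb
    have h2 : Real.exp (2 * c * b) < ψr / t := by
      rw [lt_div_iff₀ ht]; linarith [mul_comm t (Real.exp (2 * c * b))]
    have h3 : 2 * c * b < Real.log (ψr / t) :=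
      (Real.lt_log_iff_exp_lt (by positivity)).mpr h2
    have : b ≤ β := by
      rw [hβ, le_div_iff₀ h2c]; nlinarith
    exact this
  calc ∫⁻ b in {b : ℝ | ENNReal.ofReal (t * Real.exp (2 * c * b)) < ψ},
        ENNReal.ofReal (Real.exp (2 * c * b))
      ≤ ∫⁻ b in Iic β, ENNReal.ofReal (Real.exp (2 * c * b)) := lintegral_mono_set hsub
    _ = ENNReal.ofReal (∫ b in Iic β, Real.exp (2 * c * b)) :=
        (ofReal_integral_eq_lintegral_ofReal (exp_mul_integrableOn h2c)
          (Filter.Eventually.of_forall fun x => (Real.exp_pos _).le)).symm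
    _ = ψ / ENNReal.ofReal (2 * c * t) := by
        rw [exp_mul_integral_Iic β h2c, hβ, mul_div_cancel₀ _ h2c.ne', Real.exp_log (by positivity)]
        rw [show (2 * c)⁻¹ * (ψr / t) = ψr / (2 * c * t) by field_simp]
        rw [ENNReal.ofReal_div_of_pos h2ct, ← hψeq]


section aux

instance negInvProd (n : ℕ) :
    Measure.IsNegInvariant (volume : Measure (EuclideanSpace ℝ (Fin n) × ℝ)) := by
  rw [Measure.volume_eq_prod]
  constructor
  show Measure.map Neg.neg _ = _
  have h : (Neg.neg : _ → EuclideanSpace ℝ (Fin n) × ℝ) = Prod.map Neg.neg Neg.neg := rfl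
  rw [h]
  exact ((Measure.measurePreserving_neg volume).prod (Measure.measurePreserving_neg volume)).map_eq

instance sfinProd (n : ℕ) : SFinite (volume : Measure (EuclideanSpace ℝ (Fin n) × ℝ)) := by
  rw [Measure.volume_eq_prod]; infer_instance

instance addLIProd (n : ℕ) :
    Measure.IsAddLeftInvariant (volume : Measure (EuclideanSpace ℝ (Fin n) × ℝ)) := by
  rw [Measure.volume_eq_prod]; infer_instance

end aux

lemma key (n : ℕ) (c : ℝ) (hc : 0 < c)
    (p : EuclideanSpace ℝ (Fin n) → ℝ) (hp : Integrable p volume) (hpm : Measurable p)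
    (f : EuclideanSpace ℝ (Fin n) × ℝ → ℝ)
    (hf : Integrable f (volume.withDensity (fun H : EuclideanSpace ℝ (Fin n) × ℝ =>
        ENNReal.ofReal (Real.exp (2 * c * H.2)))))
    (hfm : Measurable f) (t : ℝ) (ht : 0 < t) :
    (volume.withDensity (fun H : EuclideanSpace ℝ (Fin n) × ℝ =>
        ENNReal.ofReal (Real.exp (2 * c * H.2))))
        {H : EuclideanSpace ℝ (Fin n) × ℝ |
          t < |∫ L : EuclideanSpace ℝ (Fin n) × ℝ,
                f (H - L) * (Real.exp (-2 * c * L.2) * p L.1)|} ≤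
      ENNReal.ofReal ((1 / (2 * c * t)) * (∫ x, |p x|) *
        ∫ x, |f x| ∂(volume.withDensity (fun H : EuclideanSpace ℝ (Fin n) × ℝ =>
          ENNReal.ofReal (Real.exp (2 * c * H.2))))) := by
  have h2c : (0:ℝ) < 2 * c := by linarith
  have h2ct : (0:ℝ) < 2 * c * t := by positivity
  have hw : Measurable (fun H : EuclideanSpace ℝ (Fin n) × ℝ =>
      ENNReal.ofReal (Real.exp (2 * c * H.2))) := by fun_prop
  set Ψ : EuclideanSpace ℝ (Fin n) → ENNReal := fun a =>
    ∫⁻ M : EuclideanSpace ℝ (Fin n) × ℝ,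
      ENNReal.ofReal |f M| * ENNReal.ofReal (Real.exp (2 * c * M.2)) *
        ENNReal.ofReal |p (a - M.1)| with hΨ_def
  have hΨm : Measurable Ψ := by
    apply Measurable.lintegral_prod_right'
      (f := fun q : EuclideanSpace ℝ (Fin n) × (EuclideanSpace ℝ (Fin n) × ℝ) =>
        ENNReal.ofReal |f q.2| * ENNReal.ofReal (Real.exp (2 * c * q.2.2)) *
          ENNReal.ofReal |p (q.1 - q.2.1)|)
    fun_prop
  -- pointwise bound
  have key_pt : ∀ H : EuclideanSpace ℝ (Fin n) × ℝ,
      t < |∫ L : EuclideanSpace ℝ (Fin n) × ℝ,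
            f (H - L) * (Real.exp (-2 * c * L.2) * p L.1)| →
      ENNReal.ofReal (t * Real.exp (2 * c * H.2)) < Ψ H.1 := by
    intro H hH
    have hsubst : (∫⁻ L : EuclideanSpace ℝ (Fin n) × ℝ,
        ENNReal.ofReal ‖f (H - L) * (Real.exp (-2 * c * L.2) * p L.1)‖)
          = Ψ H.1 * ENNReal.ofReal (Real.exp (2 * c * H.2))⁻¹ := by
      set G : EuclideanSpace ℝ (Fin n) × ℝ → ENNReal := fun M =>
        ENNReal.ofReal |f M| * ENNReal.ofReal (Real.exp (2 * c * M.2)) *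
          ENNReal.ofReal |p (H.1 - M.1)| * ENNReal.ofReal (Real.exp (2 * c * H.2))⁻¹ with hG_def
      have h1 : ∀ L : EuclideanSpace ℝ (Fin n) × ℝ,
          ENNReal.ofReal ‖f (H - L) * (Real.exp (-2 * c * L.2) * p L.1)‖ = G (H - L) := by
        intro L
        have hreal : ‖f (H - L) * (Real.exp (-2 * c * L.2) * p L.1)‖
            = |f (H - L)| * Real.exp (2 * c * (H - L).2) * |p (H.1 - (H - L).1)|
              * (Real.exp (2 * c * H.2))⁻¹ := by
          have hexp : Real.exp (2 * c * (H.2 - L.2)) * (Real.exp (2 * c * H.2))⁻¹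
              = Real.exp (-2 * c * L.2) := by
            rw [← Real.exp_neg, ← Real.exp_add]
            congr 1; ring
          simp only [Prod.snd_sub, Prod.fst_sub, sub_sub_cancel]
          rw [Real.norm_eq_abs, abs_mul, abs_mul, abs_of_pos (Real.exp_pos _), ← hexp]
          ring
        rw [hreal, hG_def]
        simp only
        rw [ENNReal.ofReal_mul (by positivity), ENNReal.ofReal_mul (by positivity),
          ENNReal.ofReal_mul (by positivity)]
      rw [lintegral_congr h1,
        (Measure.measurePreserving_sub_left volume H).lintegral_comp_emb
          (MeasurableEquiv.subLeft H).measurableEmbedding G,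
        hG_def]
      exact lintegral_mul_const' _ _ ENNReal.ofReal_ne_top
    have h1 : t < (Ψ H.1 * ENNReal.ofReal (Real.exp (2 * c * H.2))⁻¹).toReal := by
      refine lt_of_lt_of_le hH ?_
      rw [← hsubst, ← Real.norm_eq_abs]
      exact norm_integral_le_lintegral_norm _
    by_cases htop : Ψ H.1 = ⊤
    · rw [htop]; exact ENNReal.ofReal_lt_top
    have hX : Ψ H.1 * ENNReal.ofReal (Real.exp (2 * c * H.2))⁻¹ ≠ ⊤ :=
      ENNReal.mul_ne_top htop ENNReal.ofReal_ne_top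
    have h2 : ENNReal.ofReal t < Ψ H.1 * ENNReal.ofReal (Real.exp (2 * c * H.2))⁻¹ :=
      (ENNReal.ofReal_lt_iff_lt_toReal ht.le hX).mpr h1
    have h3 : ENNReal.ofReal t * ENNReal.ofReal (Real.exp (2 * c * H.2))
        < Ψ H.1 * ENNReal.ofReal (Real.exp (2 * c * H.2))⁻¹
            * ENNReal.ofReal (Real.exp (2 * c * H.2)) :=
      (ENNReal.mul_lt_mul_iff_left ((ENNReal.ofReal_pos.mpr (Real.exp_pos _)).ne')
        ENNReal.ofReal_ne_top).mpr h2
    have h4 : Ψ H.1 * ENNReal.ofReal (Real.exp (2 * c * H.2))⁻¹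
        * ENNReal.ofReal (Real.exp (2 * c * H.2)) = Ψ H.1 := by
      rw [mul_assoc, ← ENNReal.ofReal_mul (by positivity : (0:ℝ) ≤ (Real.exp (2 * c * H.2))⁻¹),
        inv_mul_cancel₀ (Real.exp_ne_zero _), ENNReal.ofReal_one, mul_one]
    calc ENNReal.ofReal (t * Real.exp (2 * c * H.2))
        = ENNReal.ofReal t * ENNReal.ofReal (Real.exp (2 * c * H.2)) := ENNReal.ofReal_mul ht.le
      _ < _ := h3
      _ = Ψ H.1 := h4
  -- the superset
  set E : Set (EuclideanSpace ℝ (Fin n) × ℝ) :=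
    {H | ENNReal.ofReal (t * Real.exp (2 * c * H.2)) < Ψ H.1} with hE_def
  have hEm : MeasurableSet E :=
    measurableSet_lt (by fun_prop) (hΨm.comp measurable_fst)
  have hmono : (volume.withDensity (fun H : EuclideanSpace ℝ (Fin n) × ℝ =>
      ENNReal.ofReal (Real.exp (2 * c * H.2))))
      {H : EuclideanSpace ℝ (Fin n) × ℝ |
        t < |∫ L : EuclideanSpace ℝ (Fin n) × ℝ,
              f (H - L) * (Real.exp (-2 * c * L.2) * p L.1)|}
      ≤ (volume.withDensity (fun H : EuclideanSpace ℝ (Fin n) × ℝ =>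
          ENNReal.ofReal (Real.exp (2 * c * H.2)))) E :=
    measure_mono fun H hH => key_pt H hH
  -- compute measure of E
  have hSm : ∀ a : EuclideanSpace ℝ (Fin n),
      MeasurableSet {b : ℝ | ENNReal.ofReal (t * Real.exp (2 * c * b)) < Ψ a} :=
    fun a => measurableSet_lt (by fun_prop) measurable_const
  have hνE : (volume.withDensity (fun H : EuclideanSpace ℝ (Fin n) × ℝ =>
      ENNReal.ofReal (Real.exp (2 * c * H.2)))) E
      = ∫⁻ a, ∫⁻ b in {b : ℝ | ENNReal.ofReal (t * Real.exp (2 * c * b)) < Ψ a},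
          ENNReal.ofReal (Real.exp (2 * c * b)) ∂volume ∂volume := by
    rw [withDensity_apply _ hEm, ← lintegral_indicator hEm, Measure.volume_eq_prod,
      lintegral_prod _ ((hw.indicator hEm).aemeasurable)]
    refine lintegral_congr fun a => ?_
    rw [← lintegral_indicator (hSm a)]
    refine lintegral_congr fun b => ?_
    by_cases hab : ENNReal.ofReal (t * Real.exp (2 * c * b)) < Ψ a
    · rw [Set.indicator_of_mem (by exact hab), Set.indicator_of_mem (by exact hab)]
    · rw [Set.indicator_of_notMem (by exact hab), Set.indicator_of_notMem (by exact hab)]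
  -- p integral
  have hPI : ENNReal.ofReal (∫ x, |p x|) = ∫⁻ y, ENNReal.ofReal |p y| :=
    ofReal_integral_eq_lintegral_ofReal hp.abs (Filter.Eventually.of_forall fun x => abs_nonneg _)
  have hPI_ne : (∫⁻ y, ENNReal.ofReal |p y|) ≠ ⊤ := by
    rw [← hPI]; exact ENNReal.ofReal_ne_top
  have hFI : ENNReal.ofReal (∫ x, |f x| ∂(volume.withDensity
        (fun H : EuclideanSpace ℝ (Fin n) × ℝ => ENNReal.ofReal (Real.exp (2 * c * H.2)))))
      = ∫⁻ M : EuclideanSpace ℝ (Fin n) × ℝ,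
          ENNReal.ofReal |f M| * ENNReal.ofReal (Real.exp (2 * c * M.2)) := by
    rw [ofReal_integral_eq_lintegral_ofReal hf.abs
        (Filter.Eventually.of_forall fun x => abs_nonneg _),
      lintegral_withDensity_eq_lintegral_mul _ hw (by fun_prop)]
    exact lintegral_congr fun M => by simp only [Pi.mul_apply]; exact mul_comm _ _
  -- Fubini swap
  have hswap : ∫⁻ a, Ψ a
      = (∫⁻ M : EuclideanSpace ℝ (Fin n) × ℝ,
          ENNReal.ofReal |f M| * ENNReal.ofReal (Real.exp (2 * c * M.2)))
        * ∫⁻ y, ENNReal.ofReal |p y| := by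
    calc ∫⁻ a, Ψ a
        = ∫⁻ M : EuclideanSpace ℝ (Fin n) × ℝ, ∫⁻ a,
            ENNReal.ofReal |f M| * ENNReal.ofReal (Real.exp (2 * c * M.2)) *
              ENNReal.ofReal |p (a - M.1)| ∂volume ∂volume :=
          lintegral_lintegral_swap (by fun_prop)
      _ = ∫⁻ M : EuclideanSpace ℝ (Fin n) × ℝ,
            (ENNReal.ofReal |f M| * ENNReal.ofReal (Real.exp (2 * c * M.2))) *
              ∫⁻ a, ENNReal.ofReal |p (a - M.1)| ∂volume := by
          refine lintegral_congr fun M => ?_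
          exact lintegral_const_mul' _ _
            (ENNReal.mul_ne_top ENNReal.ofReal_ne_top ENNReal.ofReal_ne_top)
      _ = ∫⁻ M : EuclideanSpace ℝ (Fin n) × ℝ,
            (ENNReal.ofReal |f M| * ENNReal.ofReal (Real.exp (2 * c * M.2))) *
              ∫⁻ y, ENNReal.ofReal |p y| := by
          refine lintegral_congr fun M => ?_
          rw [(measurePreserving_sub_right volume M.1).lintegral_comp_emb
            (MeasurableEquiv.subRight M.1).measurableEmbedding (fun y => ENNReal.ofReal |p y|)]
      _ = _ := lintegral_mul_const' _ _ hPI_ne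
  -- final chain
  have hinv_ne : (ENNReal.ofReal (2 * c * t))⁻¹ ≠ ⊤ := by
    simp only [ne_eq, ENNReal.inv_eq_top, ENNReal.ofReal_eq_zero, not_le]
    exact h2ct
  have hRHS : ENNReal.ofReal ((1 / (2 * c * t)) * (∫ x, |p x|) *
        ∫ x, |f x| ∂(volume.withDensity
          (fun H : EuclideanSpace ℝ (Fin n) × ℝ => ENNReal.ofReal (Real.exp (2 * c * H.2)))))
      = ((∫⁻ M : EuclideanSpace ℝ (Fin n) × ℝ,
            ENNReal.ofReal |f M| * ENNReal.ofReal (Real.exp (2 * c * M.2)))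
          * ∫⁻ y, ENNReal.ofReal |p y|) * (ENNReal.ofReal (2 * c * t))⁻¹ := by
    rw [ENNReal.ofReal_mul (mul_nonneg (by positivity) (integral_nonneg fun x => abs_nonneg _)),
      ENNReal.ofReal_mul (by positivity : (0:ℝ) ≤ 1 / (2 * c * t)), hPI, hFI,
      show ENNReal.ofReal (1 / (2 * c * t)) = (ENNReal.ofReal (2 * c * t))⁻¹ from by
        rw [one_div, ENNReal.ofReal_inv_of_pos h2ct]]
    ring
  refine hmono.trans ?_
  rw [hνE, hRHS]
  refine (lintegral_mono fun a => fiber_bound hc ht (Ψ a)).trans ?_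
  calc ∫⁻ a, Ψ a / ENNReal.ofReal (2 * c * t)
      = (∫⁻ a, Ψ a) * (ENNReal.ofReal (2 * c * t))⁻¹ := by
        simp_rw [div_eq_mul_inv]
        exact lintegral_mul_const' _ _ hinv_ne
    _ = _ := by rw [hswap]
    _ ≤ _ := le_rfl


set_option maxHeartbeats 1000000 in
/-- weak type (1,1) for convolution with
`σ(H', H_ℓ) = e^{-2c H_ℓ} p(H')` with respect to `dν(H) = e^{2c H_ℓ} dH` on `ℝ^{ℓ-1} × ℝ`. -/
theorem stmt1 (ℓ : ℕ) (hℓ : 1 ≤ ℓ) (c : ℝ) (hc : 0 < c)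
    (p : EuclideanSpace ℝ (Fin (ℓ - 1)) → ℝ) (hp : Integrable p volume) :
    ∀ f : EuclideanSpace ℝ (Fin (ℓ - 1)) × ℝ → ℝ,
      Integrable f
        (volume.withDensity (fun H : EuclideanSpace ℝ (Fin (ℓ - 1)) × ℝ =>
          ENNReal.ofReal (Real.exp (2 * c * H.2)))) →
      ∀ t : ℝ, 0 < t →
        (volume.withDensity (fun H : EuclideanSpace ℝ (Fin (ℓ - 1)) × ℝ =>
            ENNReal.ofReal (Real.exp (2 * c * H.2))))
            {H : EuclideanSpace ℝ (Fin (ℓ - 1)) × ℝ |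
              t < |∫ L : EuclideanSpace ℝ (Fin (ℓ - 1)) × ℝ,
                    f (H - L) * (Real.exp (-2 * c * L.2) * p L.1)|} ≤
          ENNReal.ofReal ((1 / (2 * c * t)) * (∫ x, |p x|) *
            ∫ x, |f x| ∂(volume.withDensity (fun H : EuclideanSpace ℝ (Fin (ℓ - 1)) × ℝ =>
              ENNReal.ofReal (Real.exp (2 * c * H.2))))) := by
  intro f hf t ht
  have hw : Measurable (fun H : EuclideanSpace ℝ (Fin (ℓ - 1)) × ℝ =>
      ENNReal.ofReal (Real.exp (2 * c * H.2))) := by fun_prop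
  have hac : (volume : Measure (EuclideanSpace ℝ (Fin (ℓ - 1)) × ℝ))
      ≪ volume.withDensity (fun H : EuclideanSpace ℝ (Fin (ℓ - 1)) × ℝ =>
          ENNReal.ofReal (Real.exp (2 * c * H.2))) :=
    withDensity_absolutelyContinuous' hw.aemeasurable
      (Filter.Eventually.of_forall fun H => (ENNReal.ofReal_pos.mpr (Real.exp_pos _)).ne')
  set p' := hp.1.mk p with hp'def
  have hp'm : StronglyMeasurable p' := hp.1.stronglyMeasurable_mk
  have hpp' : p =ᵐ[volume] p' := hp.1.ae_eq_mk
  have hp' : Integrable p' volume := hp.congr hpp'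
  set f' := hf.1.mk f with hf'def
  have hf'm : StronglyMeasurable f' := hf.1.stronglyMeasurable_mk
  have hff'ν : f =ᵐ[volume.withDensity (fun H : EuclideanSpace ℝ (Fin (ℓ - 1)) × ℝ =>
      ENNReal.ofReal (Real.exp (2 * c * H.2)))] f' := hf.1.ae_eq_mk
  have hf' : Integrable f' (volume.withDensity (fun H : EuclideanSpace ℝ (Fin (ℓ - 1)) × ℝ =>
      ENNReal.ofReal (Real.exp (2 * c * H.2)))) := hf.congr hff'ν
  have hff' : f =ᵐ[volume] f' := hac.ae_eq hff'ν
  have hqf : Measure.QuasiMeasurePreserving (Prod.fst)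
      (volume : Measure (EuclideanSpace ℝ (Fin (ℓ - 1)) × ℝ)) volume := by
    rw [Measure.volume_eq_prod]; exact Measure.quasiMeasurePreserving_fst
  have hsetint : ∀ H : EuclideanSpace ℝ (Fin (ℓ - 1)) × ℝ,
      (∫ L : EuclideanSpace ℝ (Fin (ℓ - 1)) × ℝ,
          f (H - L) * (Real.exp (-2 * c * L.2) * p L.1))
        = ∫ L : EuclideanSpace ℝ (Fin (ℓ - 1)) × ℝ,
            f' (H - L) * (Real.exp (-2 * c * L.2) * p' L.1) := by
    intro H
    refine integral_congr_ae ?_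
    have ae1 := (Measure.measurePreserving_sub_left
      (volume : Measure (EuclideanSpace ℝ (Fin (ℓ - 1)) × ℝ)) H).quasiMeasurePreserving.ae_eq hff'
    have ae2 := hqf.ae_eq hpp'
    filter_upwards [ae1, ae2] with L h1 h2
    simp only [Function.comp_apply] at h1 h2
    rw [h1, h2]
  have hseteq : {H : EuclideanSpace ℝ (Fin (ℓ - 1)) × ℝ |
        t < |∫ L : EuclideanSpace ℝ (Fin (ℓ - 1)) × ℝ,
              f (H - L) * (Real.exp (-2 * c * L.2) * p L.1)|}
      = {H : EuclideanSpace ℝ (Fin (ℓ - 1)) × ℝ |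
          t < |∫ L : EuclideanSpace ℝ (Fin (ℓ - 1)) × ℝ,
                f' (H - L) * (Real.exp (-2 * c * L.2) * p' L.1)|} := by
    ext H
    simp only [Set.mem_setOf_eq, hsetint H]
  rw [hseteq,
    show (∫ x, |p x|) = ∫ x, |p' x| from integral_congr_ae (by filter_upwards [hpp'] with x hx; rw [hx]),
    show (∫ x, |f x| ∂(volume.withDensity (fun H : EuclideanSpace ℝ (Fin (ℓ - 1)) × ℝ =>
          ENNReal.ofReal (Real.exp (2 * c * H.2)))))
        = ∫ x, |f' x| ∂(volume.withDensity (fun H : EuclideanSpace ℝ (Fin (ℓ - 1)) × ℝ =>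
          ENNReal.ofReal (Real.exp (2 * c * H.2)))) from integral_congr_ae (by filter_upwards [hff'ν] with x hx; rw [hx])]
  exact key (ℓ - 1) c hc p' hp' hp'm.measurable f' hf' hf'm.measurable t ht
end

section
/- Let ℓ ≥ 1 and γ > 0, and for λ = (λ', λ_ℓ) ∈ ℝ^{ℓ-1} × ℝ and ε ∈ (0, 1/4) set F_ε(λ) = [(|λ'|² + ε)² + λ_ℓ²]^{-γ/2}. Let B = {λ ∈ ℝ^ℓ : |λ| < r} for some fixed r > 0. Then there is a constant C (depending on γ, ℓ, r but not ε) such that: if 2γ < ℓ+1 then ∫_B F_ε(λ) dλ ≤ C; if 2γ = ℓ+1 then ∫_B F_ε(λ) dλ ≤ C log(1/ε); and if 2γ > ℓ+1 then ∫_B F_ε(λ) dλ ≤ C ε^{(ℓ+1)/2 - γ}. -/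
open MeasureTheory Real

open scoped ENNReal

lemma volball (m : ℕ) {R : ℝ} (hR : 0 < R) :
    volume (Metric.ball (0 : EuclideanSpace ℝ (Fin m)) R)
      = ENNReal.ofReal (R ^ m) * volume (Metric.ball (0 : EuclideanSpace ℝ (Fin m)) 1) := by
  cases m with
  | zero =>
      have h : ∀ {S : ℝ}, 0 < S → Metric.ball (0 : EuclideanSpace ℝ (Fin 0)) S = Set.univ := by
        intro S hS
        exact Set.eq_univ_of_forall fun x => by
          simp [Metric.mem_ball, Subsingleton.elim x 0, hS]
      rw [h hR, h one_pos]; simp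
  | succ n =>
      haveI : Nontrivial (EuclideanSpace ℝ (Fin (n+1))) := by infer_instance
      rw [Measure.addHaar_ball volume 0 hR.le, finrank_euclideanSpace_fin]

lemma aux (m : ℕ) (γ r p : ℝ) (hγ : 0 < γ) (hr : 0 < r)
    (hp : p = ((m : ℝ) + 2) / (2 * γ)) :
    ∃ V K : ℝ, 0 ≤ V ∧ 0 ≤ K ∧ ∀ ε ∈ Set.Ioo (0 : ℝ) (1 / 4),
      (∫ l in {x : EuclideanSpace ℝ (Fin m) × ℝ | ‖x.1‖ ^ 2 + x.2 ^ 2 < r ^ 2},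
          ((‖l.1‖ ^ 2 + ε) ^ 2 + l.2 ^ 2) ^ (-(γ / 2)))
        ≤ V + K * ∫ t in Set.Ioc (1 : ℝ) (ε ^ (-γ)), t ^ (-p) := by
  set E := EuclideanSpace ℝ (Fin m)
  set B : Set (E × ℝ) := {x : E × ℝ | ‖x.1‖ ^ 2 + x.2 ^ 2 < r ^ 2} with hB
  set V1 : ℝ≥0∞ := volume (Metric.ball (0 : E) 1) with hV1def
  have hV1 : V1 ≠ ⊤ := measure_ball_lt_top.ne
  have hK : (2 * V1) ≠ ⊤ := ENNReal.mul_ne_top (by norm_num) hV1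
  have hBsub : B ⊆ (Metric.ball (0 : E) r) ×ˢ (Metric.ball (0 : ℝ) r) := by
    intro x hx
    have hx' : ‖x.1‖ ^ 2 + x.2 ^ 2 < r ^ 2 := hx
    constructor
    · simp only [Metric.mem_ball, dist_zero_right]
      exact lt_of_pow_lt_pow_left₀ 2 hr.le (by nlinarith [sq_nonneg x.2])
    · simp only [Metric.mem_ball, dist_zero_right, Real.norm_eq_abs]
      refine lt_of_pow_lt_pow_left₀ 2 hr.le ?_
      rw [sq_abs]; nlinarith [sq_nonneg ‖x.1‖]
  have hVB : volume B ≠ ⊤ := by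
    refine (lt_of_le_of_lt (measure_mono hBsub) ?_).ne
    rw [MeasureTheory.Measure.volume_eq_prod, Measure.prod_prod]
    exact ENNReal.mul_lt_top measure_ball_lt_top measure_ball_lt_top
  have hBmeas : MeasurableSet B :=
    (isOpen_lt (by fun_prop) continuous_const).measurableSet
  refine ⟨(volume B).toReal, (2 * V1).toReal, ENNReal.toReal_nonneg, ENNReal.toReal_nonneg, ?_⟩
  rintro ε ⟨hε0, hε4⟩
  set T : ℝ := ε ^ (-γ) with hTdef
  have hT1 : 1 < T :=
    (Real.one_lt_rpow_iff_of_pos hε0).2 (Or.inr ⟨by linarith, by linarith⟩)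
  have hbase : ∀ x : E × ℝ, 0 < (‖x.1‖ ^ 2 + ε) ^ 2 + x.2 ^ 2 := by
    intro x
    have h1 : 0 < ‖x.1‖ ^ 2 + ε := add_pos_of_nonneg_of_pos (sq_nonneg _) hε0
    exact add_pos_of_pos_of_nonneg (pow_pos h1 2) (sq_nonneg _)
  have hFc : Continuous fun x : E × ℝ => ((‖x.1‖ ^ 2 + ε) ^ 2 + x.2 ^ 2) ^ (-(γ / 2)) := by
    refine Continuous.rpow_const ?_ fun x => Or.inl (hbase x).ne'
    fun_prop
  have hFmeas : ∀ t : ℝ,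
      MeasurableSet {x : E × ℝ | t < ((‖x.1‖ ^ 2 + ε) ^ 2 + x.2 ^ 2) ^ (-(γ / 2))} :=
    fun t => (isOpen_lt continuous_const hFc).measurableSet
  have hFle : ∀ x : E × ℝ, ((‖x.1‖ ^ 2 + ε) ^ 2 + x.2 ^ 2) ^ (-(γ / 2)) ≤ T := by
    intro x
    have h1 : (0:ℝ) < ε ^ 2 := pow_pos hε0 2
    have h2 : ε ^ 2 ≤ (‖x.1‖ ^ 2 + ε) ^ 2 + x.2 ^ 2 := by
      nlinarith [sq_nonneg ‖x.1‖, sq_nonneg x.2, sq_nonneg (‖x.1‖ ^ 2)]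
    refine le_trans (Real.rpow_le_rpow_of_nonpos h1 h2 (by linarith)) (le_of_eq ?_)
    rw [hTdef, ← Real.rpow_natCast ε 2, ← Real.rpow_mul hε0.le]
    congr 1; push_cast; ring
  -- distribution function bound
  have gbound : ∀ t : ℝ, 0 < t →
      volume {x : E × ℝ | t < ((‖x.1‖ ^ 2 + ε) ^ 2 + x.2 ^ 2) ^ (-(γ / 2))}
        ≤ (2 * V1) * ENNReal.ofReal (t ^ (-p)) := by
    intro t ht
    set M : ℝ := t ^ (-(2 / γ)) with hMdef
    have hM : 0 < M := Real.rpow_pos_of_pos ht _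
    set R1 : ℝ := M ^ ((4:ℝ)⁻¹) with hR1def
    set R2 : ℝ := M ^ ((2:ℝ)⁻¹) with hR2def
    have hR1 : 0 < R1 := Real.rpow_pos_of_pos hM _
    have hR2 : 0 < R2 := Real.rpow_pos_of_pos hM _
    have hR14 : R1 ^ (4:ℕ) = M := by
      rw [hR1def, ← Real.rpow_natCast (M ^ ((4:ℝ)⁻¹)) 4, ← Real.rpow_mul hM.le]
      norm_num
    have hR22 : R2 ^ (2:ℕ) = M := by
      rw [hR2def, ← Real.rpow_natCast (M ^ ((2:ℝ)⁻¹)) 2, ← Real.rpow_mul hM.le]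
      norm_num
    have hsub : {x : E × ℝ | t < ((‖x.1‖ ^ 2 + ε) ^ 2 + x.2 ^ 2) ^ (-(γ / 2))}
        ⊆ (Metric.ball (0 : E) R1) ×ˢ (Metric.ball (0 : ℝ) R2) := by
      intro x hx
      have hb := hbase x
      have hxlt : t < ((‖x.1‖ ^ 2 + ε) ^ 2 + x.2 ^ 2) ^ (-(γ / 2)) := hx
      have hblt : (‖x.1‖ ^ 2 + ε) ^ 2 + x.2 ^ 2 < M := by
        have hz : -(2 / γ) < 0 := neg_lt_zero.mpr (by positivity)
        have h2 := Real.rpow_lt_rpow_of_neg ht hxlt hz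
        rwa [← Real.rpow_mul hb.le, (show -(γ / 2) * -(2 / γ) = 1 by field_simp),
          Real.rpow_one] at h2
      constructor
      · simp only [Metric.mem_ball, dist_zero_right]
        refine lt_of_pow_lt_pow_left₀ 4 hR1.le ?_
        rw [hR14]; nlinarith [norm_nonneg x.1, sq_nonneg x.2, hε0.le, sq_nonneg ‖x.1‖]
      · simp only [Metric.mem_ball, dist_zero_right, Real.norm_eq_abs]
        refine lt_of_pow_lt_pow_left₀ 2 hR2.le ?_
        rw [hR22, sq_abs]; nlinarith [sq_nonneg (‖x.1‖ ^ 2 + ε)]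
    refine le_trans (measure_mono hsub) (le_of_eq ?_)
    rw [MeasureTheory.Measure.volume_eq_prod, Measure.prod_prod, volball m hR1,
      Real.volume_ball]
    have hkey : R1 ^ m * (2 * R2) = 2 * t ^ (-p) := by
      have h1 : R1 ^ m = M ^ ((4:ℝ)⁻¹ * m) := by
        rw [hR1def, ← Real.rpow_natCast (M ^ ((4:ℝ)⁻¹)) m, ← Real.rpow_mul hM.le]
      have h2 : M ^ ((4:ℝ)⁻¹ * m) * R2 = M ^ ((4:ℝ)⁻¹ * m + (2:ℝ)⁻¹) :=
        (Real.rpow_add hM _ _).symm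
      have h3 : M ^ ((4:ℝ)⁻¹ * m + (2:ℝ)⁻¹) = t ^ (-p) := by
        rw [hMdef, ← Real.rpow_mul ht.le]
        congr 1
        rw [hp]; field_simp; ring
      calc R1 ^ m * (2 * R2) = 2 * (M ^ ((4:ℝ)⁻¹ * m) * R2) := by rw [h1]; ring
        _ = 2 * t ^ (-p) := by rw [h2, h3]
    have e1 : ENNReal.ofReal (R1 ^ m * (2 * R2)) =
        ENNReal.ofReal (R1 ^ m) * ENNReal.ofReal (2 * R2) :=
      ENNReal.ofReal_mul (by positivity)
    have e2 : ENNReal.ofReal ((2:ℝ) * t ^ (-p)) =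
        2 * ENNReal.ofReal (t ^ (-p)) := by
      rw [ENNReal.ofReal_mul (by norm_num : (0:ℝ) ≤ 2)]
      norm_num
    calc ENNReal.ofReal (R1 ^ m) * V1 * ENNReal.ofReal (2 * R2)
        = V1 * ENNReal.ofReal (R1 ^ m * (2 * R2)) := by rw [e1]; ring
      _ = 2 * V1 * ENNReal.ofReal (t ^ (-p)) := by rw [hkey, e2]; ring
  -- nonnegativity and measurability facts for layer cake
  have hnn : 0 ≤ᵐ[volume.restrict B]
      fun x : E × ℝ => ((‖x.1‖ ^ 2 + ε) ^ 2 + x.2 ^ 2) ^ (-(γ / 2)) :=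
    ae_of_all _ fun x => Real.rpow_nonneg (hbase x).le _
  have hlc := lintegral_eq_lintegral_meas_lt (volume.restrict B) hnn hFc.aemeasurable
  -- integrability of t^(-p) on Ioc 1 T
  have hcont : ContinuousOn (fun t : ℝ => t ^ (-p)) (Set.Icc 1 T) :=
    ContinuousOn.rpow_const continuousOn_id
      (fun t ht => Or.inl (by intro h; rw [h] at ht; linarith [ht.1]))
  have hint : IntegrableOn (fun t : ℝ => t ^ (-p)) (Set.Ioc 1 T) volume :=
    (hcont.integrableOn_Icc).mono_set Set.Ioc_subset_Icc_self
  have hJnn : 0 ≤ ∫ t in Set.Ioc (1:ℝ) T, t ^ (-p) :=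
    setIntegral_nonneg measurableSet_Ioc fun t ht => Real.rpow_nonneg (by linarith [ht.1]) _
  set J : ℝ := ∫ t in Set.Ioc (1:ℝ) T, t ^ (-p) with hJdef
  rw [MeasureTheory.integral_eq_lintegral_of_nonneg_ae hnn hFc.aestronglyMeasurable]
  refine ENNReal.toReal_le_of_le_ofReal
    (add_nonneg ENNReal.toReal_nonneg (mul_nonneg ENNReal.toReal_nonneg hJnn)) ?_
  rw [hlc]
  have hcg : (∫⁻ t in Set.Ioi (0:ℝ), (volume.restrict B)
        {x : E × ℝ | t < ((‖x.1‖ ^ 2 + ε) ^ 2 + x.2 ^ 2) ^ (-(γ / 2))})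
      = ∫⁻ t in Set.Ioi (0:ℝ),
        volume ({x : E × ℝ | t < ((‖x.1‖ ^ 2 + ε) ^ 2 + x.2 ^ 2) ^ (-(γ / 2))} ∩ B) :=
    lintegral_congr fun t => Measure.restrict_apply (hFmeas t)
  rw [hcg]
  have hd2 : Disjoint (Set.Ioc (0:ℝ) 1) (Set.Ioc 1 T) := Set.Ioc_disjoint_Ioc_of_le le_rfl
  have hd1 : Disjoint (Set.Ioc (0:ℝ) 1 ∪ Set.Ioc 1 T) (Set.Ioi T) := by
    rw [Set.Ioc_union_Ioc_eq_Ioc zero_le_one hT1.le]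
    exact Set.Ioc_disjoint_Ioi le_rfl
  have hsplit : Set.Ioi (0:ℝ) = (Set.Ioc 0 1 ∪ Set.Ioc 1 T) ∪ Set.Ioi T := by
    rw [Set.Ioc_union_Ioc_eq_Ioc zero_le_one hT1.le,
      Set.Ioc_union_Ioi_eq_Ioi (by linarith : (0:ℝ) ≤ T)]
  rw [hsplit, lintegral_union measurableSet_Ioi hd1, lintegral_union measurableSet_Ioc hd2]
  have ht1 : (∫⁻ t in Set.Ioc (0:ℝ) 1,
      volume ({x : E × ℝ | t < ((‖x.1‖ ^ 2 + ε) ^ 2 + x.2 ^ 2) ^ (-(γ / 2))} ∩ B)) ≤ volume B := by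
    refine le_trans (lintegral_mono fun t => measure_mono Set.inter_subset_right) ?_
    rw [setLIntegral_const, Real.volume_Ioc]
    simp
  have ht2 : (∫⁻ t in Set.Ioc (1:ℝ) T,
      volume ({x : E × ℝ | t < ((‖x.1‖ ^ 2 + ε) ^ 2 + x.2 ^ 2) ^ (-(γ / 2))} ∩ B))
      ≤ (2 * V1) * ENNReal.ofReal J := by
    have step1 : (∫⁻ t in Set.Ioc (1:ℝ) T,
        volume ({x : E × ℝ | t < ((‖x.1‖ ^ 2 + ε) ^ 2 + x.2 ^ 2) ^ (-(γ / 2))} ∩ B))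
        ≤ ∫⁻ t in Set.Ioc (1:ℝ) T, (2 * V1) * ENNReal.ofReal (t ^ (-p)) := by
      refine lintegral_mono_ae ((ae_restrict_iff' measurableSet_Ioc).mpr (ae_of_all _ ?_))
      intro t ht
      exact le_trans (measure_mono Set.inter_subset_left) (gbound t (by linarith [ht.1]))
    have hnnJ : 0 ≤ᵐ[volume.restrict (Set.Ioc (1:ℝ) T)] fun t : ℝ => t ^ (-p) :=
      (ae_restrict_iff' measurableSet_Ioc).mpr
        (ae_of_all _ fun t ht => Real.rpow_nonneg (by linarith [ht.1]) _)
    refine step1.trans (le_of_eq ?_)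
    rw [lintegral_const_mul' _ _ hK, ← ofReal_integral_eq_lintegral_ofReal hint hnnJ]
  have ht3 : (∫⁻ t in Set.Ioi T,
      volume ({x : E × ℝ | t < ((‖x.1‖ ^ 2 + ε) ^ 2 + x.2 ^ 2) ^ (-(γ / 2))} ∩ B)) = 0 := by
    have hz : ∀ t ∈ Set.Ioi T,
        volume ({x : E × ℝ | t < ((‖x.1‖ ^ 2 + ε) ^ 2 + x.2 ^ 2) ^ (-(γ / 2))} ∩ B)
          = (fun _ : ℝ => (0:ℝ≥0∞)) t := by
      intro t ht
      have hempty : {x : E × ℝ | t < ((‖x.1‖ ^ 2 + ε) ^ 2 + x.2 ^ 2) ^ (-(γ / 2))} = ∅ :=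
        Set.eq_empty_iff_forall_notMem.mpr fun x hx =>
          absurd hx (not_lt.mpr ((hFle x).trans ht.le))
      rw [hempty]; simp
    rw [setLIntegral_congr_fun_ae measurableSet_Ioi (ae_of_all _ hz), lintegral_zero]
  calc (∫⁻ t in Set.Ioc (0:ℝ) 1,
      volume ({x : E × ℝ | t < ((‖x.1‖ ^ 2 + ε) ^ 2 + x.2 ^ 2) ^ (-(γ / 2))} ∩ B))
      + (∫⁻ t in Set.Ioc (1:ℝ) T,
      volume ({x : E × ℝ | t < ((‖x.1‖ ^ 2 + ε) ^ 2 + x.2 ^ 2) ^ (-(γ / 2))} ∩ B))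
      + (∫⁻ t in Set.Ioi T,
      volume ({x : E × ℝ | t < ((‖x.1‖ ^ 2 + ε) ^ 2 + x.2 ^ 2) ^ (-(γ / 2))} ∩ B))
      ≤ volume B + (2 * V1) * ENNReal.ofReal J + 0 := by
        exact add_le_add (add_le_add ht1 ht2) (le_of_eq ht3)
    _ = ENNReal.ofReal ((volume B).toReal + (2 * V1).toReal * J) := by
        rw [add_zero, ENNReal.ofReal_add ENNReal.toReal_nonneg
          (mul_nonneg ENNReal.toReal_nonneg hJnn), ENNReal.ofReal_mul ENNReal.toReal_nonneg,
          ENNReal.ofReal_toReal hVB, ENNReal.ofReal_toReal hK]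

/-- the anisotropic integral estimates for
`F_ε(λ) = [(|λ'|² + ε)² + λ_ℓ²]^{-γ/2}` over the ball `B = {|λ| < r}`. -/
theorem stmt3 (ℓ : ℕ) (hℓ : 1 ≤ ℓ) (γ r : ℝ) (hγ : 0 < γ) (hr : 0 < r) :
    ∃ C : ℝ, 0 < C ∧ ∀ ε ∈ Set.Ioo (0 : ℝ) (1 / 4),
      (2 * γ < (ℓ : ℝ) + 1 →
        (∫ l in {x : EuclideanSpace ℝ (Fin (ℓ - 1)) × ℝ | ‖x.1‖ ^ 2 + x.2 ^ 2 < r ^ 2},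
          ((‖l.1‖ ^ 2 + ε) ^ 2 + l.2 ^ 2) ^ (-(γ / 2))) ≤ C) ∧
      (2 * γ = (ℓ : ℝ) + 1 →
        (∫ l in {x : EuclideanSpace ℝ (Fin (ℓ - 1)) × ℝ | ‖x.1‖ ^ 2 + x.2 ^ 2 < r ^ 2},
          ((‖l.1‖ ^ 2 + ε) ^ 2 + l.2 ^ 2) ^ (-(γ / 2))) ≤ C * Real.log (1 / ε)) ∧
      ((ℓ : ℝ) + 1 < 2 * γ →
        (∫ l in {x : EuclideanSpace ℝ (Fin (ℓ - 1)) × ℝ | ‖x.1‖ ^ 2 + x.2 ^ 2 < r ^ 2},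
          ((‖l.1‖ ^ 2 + ε) ^ 2 + l.2 ^ 2) ^ (-(γ / 2))) ≤
            C * ε ^ (((ℓ : ℝ) + 1) / 2 - γ)) := by
  set n : ℕ := ℓ - 1 with hn
  have hcast : ((n : ℕ) : ℝ) + 2 = (ℓ : ℝ) + 1 := by
    rw [hn, Nat.cast_sub hℓ]; push_cast; ring
  simp only [← hcast]
  set p : ℝ := ((n:ℝ) + 2) / (2 * γ) with hpdef
  obtain ⟨V, K, hV, hK, hbound⟩ := aux n γ r p hγ hr hpdef
  have hT1 : ∀ ε : ℝ, 0 < ε → ε < 1/4 → 1 < ε ^ (-γ) := fun ε h0 h4 =>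
    (Real.one_lt_rpow_iff_of_pos h0).2 (Or.inr ⟨by linarith, by linarith⟩)
  have hJval : ∀ ε : ℝ, 0 < ε → ε < 1/4 → p ≠ 1 →
      (∫ t in Set.Ioc (1:ℝ) (ε ^ (-γ)), t ^ (-p))
        = ((ε ^ (-γ)) ^ (1 - p) - 1) / (1 - p) := by
    intro ε h0 h4 hp1
    have hT := hT1 ε h0 h4
    have h0T : (0:ℝ) ∉ Set.uIcc 1 (ε ^ (-γ)) := by
      rw [Set.uIcc_of_le hT.le]
      rintro ⟨h0', -⟩; linarith
    rw [← intervalIntegral.integral_of_le hT.le,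
      integral_rpow (Or.inr ⟨fun h => hp1 (neg_injective h), h0T⟩),
      Real.one_rpow, show -p + 1 = 1 - p from by ring]
  have hJval1 : ∀ ε : ℝ, 0 < ε → ε < 1/4 → p = 1 →
      (∫ t in Set.Ioc (1:ℝ) (ε ^ (-γ)), t ^ (-p)) = γ * Real.log (1/ε) := by
    intro ε h0 h4 hp1
    have hT := hT1 ε h0 h4
    rw [← intervalIntegral.integral_of_le hT.le, hp1]
    rw [intervalIntegral.integral_congr
      (g := fun t : ℝ => t⁻¹) (fun t _ => Real.rpow_neg_one t),
      integral_inv_of_pos one_pos (by linarith), div_one, Real.log_rpow h0, one_div,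
      Real.log_inv]
    ring
  rcases lt_trichotomy (2*γ) ((n:ℝ)+2) with hcase|hcase|hcase
  · -- subcritical : p > 1
    have hp_gt : 1 < p := by
      rw [hpdef, lt_div_iff₀ (by positivity)]; linarith
    have h1p : (0:ℝ) < 1/(p-1) := one_div_pos.mpr (by linarith)
    refine ⟨V + K * (1/(p-1)) + 1, by nlinarith [mul_nonneg hK h1p.le], ?_⟩
    rintro ε ⟨hε0, hε4⟩
    refine ⟨fun _ => ?_, fun h => absurd h (by linarith), fun h => absurd h (by linarith)⟩
    have hb := hbound ε ⟨hε0, hε4⟩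
    have hJ := hJval ε hε0 hε4 (ne_of_gt hp_gt)
    rw [hJ] at hb
    set X : ℝ := (ε ^ (-γ)) ^ (1 - p) with hXdef
    have hX0 : 0 < X := Real.rpow_pos_of_pos (Real.rpow_pos_of_pos hε0 _) _
    have hX1 : X < 1 :=
      Real.rpow_lt_one_of_one_lt_of_neg (hT1 ε hε0 hε4) (by linarith)
    have hJle : (X - 1) / (1 - p) ≤ 1/(p-1) := by
      rw [show (X - 1) / (1 - p) = (1 - X)/(p-1) from by
        rw [div_eq_div_iff (by linarith) (by linarith)]; ring]
      exact (div_le_div_iff_of_pos_right (by linarith)).mpr (by linarith)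
    have := mul_le_mul_of_nonneg_left hJle hK
    linarith
  · -- critical : p = 1
    have hp1 : p = 1 := by
      rw [hpdef, ← hcase]; field_simp
    refine ⟨V + K * γ + 1, by nlinarith [mul_nonneg hK hγ.le], ?_⟩
    rintro ε ⟨hε0, hε4⟩
    refine ⟨fun h => absurd h (by linarith), fun _ => ?_, fun h => absurd h (by linarith)⟩
    have hb := hbound ε ⟨hε0, hε4⟩
    have hJ := hJval1 ε hε0 hε4 hp1
    rw [hJ] at hb
    have h4 : (4:ℝ) < 1/ε := by rw [lt_div_iff₀ hε0]; linarith
    have hexp4 : Real.exp 1 < 4 := lt_trans Real.exp_one_lt_d9 (by norm_num)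
    have hlog4 : 1 < Real.log 4 := (Real.lt_log_iff_exp_lt (by norm_num)).mpr hexp4
    have hL : 1 < Real.log (1/ε) :=
      lt_of_lt_of_le hlog4 (Real.log_le_log (by norm_num) h4.le)
    nlinarith [mul_nonneg hV (sub_nonneg.mpr hL.le),
      mul_nonneg (mul_nonneg hK hγ.le) (sub_nonneg.mpr hL.le)]
  · -- supercritical : p < 1
    have hp_lt : p < 1 := by
      rw [hpdef, div_lt_one (by positivity)]; linarith
    have h1p : (0:ℝ) < 1/(1-p) := one_div_pos.mpr (by linarith)
    have hpγ : p * (2*γ) = (n:ℝ)+2 := by rw [hpdef]; field_simp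
    refine ⟨V + K * (1/(1-p)) + 1, by nlinarith [mul_nonneg hK h1p.le], ?_⟩
    rintro ε ⟨hε0, hε4⟩
    refine ⟨fun h => absurd h (by linarith), fun h => absurd h (by linarith), fun _ => ?_⟩
    have hb := hbound ε ⟨hε0, hε4⟩
    have hJ := hJval ε hε0 hε4 (ne_of_lt hp_lt)
    rw [hJ] at hb
    have hexp : (ε ^ (-γ)) ^ (1 - p) = ε ^ (((n:ℝ)+2)/2 - γ) := by
      rw [← Real.rpow_mul hε0.le]
      congr 1
      linear_combination (1/2) * hpγ
    rw [hexp] at hb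
    set Ee : ℝ := ε ^ (((n:ℝ)+2)/2 - γ) with hEdef
    have hE1 : 1 ≤ Ee :=
      Real.one_le_rpow_of_pos_of_le_one_of_nonpos hε0 (by linarith) (by linarith)
    have hJle : (Ee - 1)/(1-p) ≤ Ee * (1/(1-p)) := by
      rw [mul_one_div]
      exact (div_le_div_iff_of_pos_right (by linarith)).mpr (by linarith)
    have := mul_le_mul_of_nonneg_left hJle hK
    nlinarith [mul_nonneg hV (sub_nonneg.mpr hE1)]
end

section
/- Let a* be a Euclidean space with inner product ⟨·,·⟩, ρ ∈ a* nonzero, and define Q(ζ) = ⟨ζ, ζ⟩ + ⟨ρ, ρ⟩ for ζ in the complexification, where ⟨·,·⟩ is extended bilinearly. Let η ∈ a* with |η| = |ρ| and ε ∈ (0, 1/4). Then, writing λ = (λ', λ_η) where λ_η is the component of λ along η, we have |Q(λ + i(1-ε)η)|² = [λ_η² + |λ'|² + (2ε - ε²)|ρ|²]² + 4(1-ε)²|ρ|² λ_η², and there exists a constant C > 0 (independent of ε, η, λ) such that |Q(λ + i(1-ε)η)|² ≥ C [(|λ'|² + ε)² + λ_η²] for all λ in the ball {|λ| < |ρ|}.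 -/
open Real
open scoped RealInnerProductSpace

/-- explicit formula and lower bound for `|Q(λ + i(1-ε)η)|²`, where
`Q(ζ) = ⟨ζ,ζ⟩ + ⟨ρ,ρ⟩` (bilinear extension), `|η| = |ρ|`, `ε ∈ (0,1/4)`, and
`λ = (λ', λ_η)` with `λ_η` the component of `λ` along `η`. -/
theorem stmt4 {V : Type*} [NormedAddCommGroup V] [InnerProductSpace ℝ V]
    (ρ : V) (hρ : ρ ≠ 0) :
    (∀ η : V, ‖η‖ = ‖ρ‖ → ∀ ε ∈ Set.Ioo (0 : ℝ) (1 / 4), ∀ l : V,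
      ‖
          (((‖l‖ ^ 2 - ‖(1 - ε) • η‖ ^ 2 + ‖ρ‖ ^ 2 : ℝ) : ℂ) +
            ((2 * ⟪l, (1 - ε) • η⟫ : ℝ) : ℂ) * Complex.I)‖ ^ 2 =
        ((⟪l, η⟫ / ‖η‖) ^ 2 + (‖l‖ ^ 2 - (⟪l, η⟫ / ‖η‖) ^ 2) +
            (2 * ε - ε ^ 2) * ‖ρ‖ ^ 2) ^ 2 +
          4 * (1 - ε) ^ 2 * ‖ρ‖ ^ 2 * (⟪l, η⟫ / ‖η‖) ^ 2) ∧
    (∃ C : ℝ, 0 < C ∧ ∀ η : V, ‖η‖ = ‖ρ‖ → ∀ ε ∈ Set.Ioo (0 : ℝ) (1 / 4), ∀ l : V,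
      ‖l‖ < ‖ρ‖ →
        C * (((‖l‖ ^ 2 - (⟪l, η⟫ / ‖η‖) ^ 2) + ε) ^ 2 + (⟪l, η⟫ / ‖η‖) ^ 2) ≤
          ‖
              (((‖l‖ ^ 2 - ‖(1 - ε) • η‖ ^ 2 + ‖ρ‖ ^ 2 : ℝ) : ℂ) +
                ((2 * ⟪l, (1 - ε) • η⟫ : ℝ) : ℂ) * Complex.I)‖ ^ 2) := by
  have hR : 0 < ‖ρ‖ := norm_pos_iff.mpr hρ
  constructor
  · intro η hη ε hε l
    have hηn : ‖η‖ ≠ 0 := by rw [hη]; exact ne_of_gt hR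
    obtain ⟨a, ha⟩ : ∃ a, ⟪l, η⟫ = a * ‖η‖ := ⟨⟪l, η⟫ / ‖η‖, by field_simp⟩
    have ha' : ⟪l, η⟫ / ‖η‖ = a := by rw [ha]; field_simp
    have h1 : ‖(1 - ε) • η‖ ^ 2 = (1 - ε) ^ 2 * ‖η‖ ^ 2 := by
      rw [norm_smul, Real.norm_eq_abs, mul_pow, sq_abs]
    rw [Complex.sq_norm, Complex.normSq_add_mul_I, real_inner_smul_right, ha,
      mul_div_cancel_right₀ a hηn, h1, hη]
    ring
  · refine ⟨min ((min 1 ((7/4) * ‖ρ‖ ^ 2)) ^ 2) ((9/4) * ‖ρ‖ ^ 2), by positivity, ?_⟩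
    intro η hη ε hε l _
    obtain ⟨hε0, hε1⟩ := hε
    have hηn : ‖η‖ ≠ 0 := by rw [hη]; exact ne_of_gt hR
    obtain ⟨a, ha⟩ : ∃ a, ⟪l, η⟫ = a * ‖η‖ := ⟨⟪l, η⟫ / ‖η‖, by field_simp⟩
    have ha' : ⟪l, η⟫ / ‖η‖ = a := by rw [ha]; field_simp
    have h1 : ‖(1 - ε) • η‖ ^ 2 = (1 - ε) ^ 2 * ‖η‖ ^ 2 := by
      rw [norm_smul, Real.norm_eq_abs, mul_pow, sq_abs]
    rw [Complex.sq_norm, Complex.normSq_add_mul_I, real_inner_smul_right, ha,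
      mul_div_cancel_right₀ a hηn, h1, hη]
    set R := ‖ρ‖ with hRdef
    set t := ‖l‖ with htdef
    set c := min 1 ((7/4) * R ^ 2) with hc
    set C := min (c ^ 2) ((9/4) * R ^ 2) with hC
    clear_value R t c C
    have hc1 : c ≤ 1 := by rw [hc]; exact min_le_left _ _
    have hc2 : c ≤ (7/4) * R ^ 2 := by rw [hc]; exact min_le_right _ _
    have hc0 : 0 < c := by rw [hc]; exact lt_min one_pos (by positivity)
    -- Cauchy-Schwarz: a^2 ≤ t^2
    have hcs : a ^ 2 ≤ t ^ 2 := by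
      have h := abs_real_inner_le_norm l η
      rw [ha, hη, ← htdef] at h
      have h2 : |a| * R ≤ t * R := by
        calc |a| * R = |a * R| := by rw [abs_mul, abs_of_pos hR]
        _ ≤ t * R := h
      have : |a| ≤ t := le_of_mul_le_mul_right h2 hR
      calc a ^ 2 = |a| ^ 2 := (sq_abs a).symm
      _ ≤ t ^ 2 := by nlinarith [abs_nonneg a]
    have hb : 0 ≤ t ^ 2 - a ^ 2 := by linarith
    -- real part bound
    have hRe : c * ((t ^ 2 - a ^ 2) + ε) ≤ t ^ 2 - (1 - ε) ^ 2 * R ^ 2 + R ^ 2 := by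
      nlinarith [mul_nonneg hb (by linarith : (0:ℝ) ≤ 1 - c),
        mul_nonneg hε0.le (by linarith : (0:ℝ) ≤ 7/4 * R ^ 2 - c),
        mul_nonneg (mul_nonneg hε0.le (by linarith : (0:ℝ) ≤ 2 - ε - 7/4)) (sq_nonneg R),
        sq_nonneg a]
    have hRe0 : 0 ≤ c * ((t ^ 2 - a ^ 2) + ε) := by positivity
    have hResq : c ^ 2 * ((t ^ 2 - a ^ 2) + ε) ^ 2 ≤
        (t ^ 2 - (1 - ε) ^ 2 * R ^ 2 + R ^ 2) ^ 2 := by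
      have h := pow_le_pow_left₀ hRe0 hRe 2
      calc c ^ 2 * ((t ^ 2 - a ^ 2) + ε) ^ 2 = (c * ((t ^ 2 - a ^ 2) + ε)) ^ 2 := by ring
        _ ≤ _ := h
    have hIm : (9/4) * R ^ 2 * a ^ 2 ≤ (2 * ((1 - ε) * (a * R))) ^ 2 := by
      have h14 : (0:ℝ) ≤ 4 * (1 - ε) ^ 2 - 9/4 := by nlinarith
      have hpos := mul_nonneg (mul_nonneg h14 (sq_nonneg R)) (sq_nonneg a)
      calc (9/4) * R ^ 2 * a ^ 2
          ≤ (9/4) * R ^ 2 * a ^ 2 + (4 * (1 - ε) ^ 2 - 9/4) * R ^ 2 * a ^ 2 := by linarith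
        _ = (2 * ((1 - ε) * (a * R))) ^ 2 := by ring
    have hC1 : C * ((t ^ 2 - a ^ 2) + ε) ^ 2 ≤ c ^ 2 * ((t ^ 2 - a ^ 2) + ε) ^ 2 := by
      rw [hC]; exact mul_le_mul_of_nonneg_right (min_le_left _ _) (sq_nonneg _)
    have hC2 : C * a ^ 2 ≤ (9/4) * R ^ 2 * a ^ 2 := by
      rw [hC]; exact mul_le_mul_of_nonneg_right (min_le_right _ _) (sq_nonneg _)
    have hexp : C * (((t ^ 2 - a ^ 2) + ε) ^ 2 + a ^ 2) =
        C * ((t ^ 2 - a ^ 2) + ε) ^ 2 + C * a ^ 2 := by ring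
    linarith
end

section
/- Let c₀, c₁ > 0 with c₀ c₁ > 1, and define the cone Γ_c = {(H', H_ℓ) ∈ ℝ^{ℓ-1} × ℝ : |H'| < c H_ℓ}. Suppose x ∉ Γ_{c₁} ∪ (-Γ_{c₁}), y ∈ Γ_{1/c₀}, and x + y ∈ Γ_{1/c₀}. Then y_ℓ > ((c₀ - 1/c₁)/4) |x'| + ((c₀ c₁ - 1)/4) |x_ℓ|. -/
open Real

/-- if `x ∉ Γ_{c₁} ∪ (-Γ_{c₁})` (i.e. `|x'| ≥ c₁|x_ℓ|`), `y ∈ Γ_{1/c₀}`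
(i.e. `c₀|y'| < y_ℓ`) and `x + y ∈ Γ_{1/c₀}`, with `c₀c₁ > 1`, then
`y_ℓ > ((c₀ - 1/c₁)/4)|x'| + ((c₀c₁ - 1)/4)|x_ℓ|`. -/
theorem stmt8 (ℓ : ℕ) (c₀ c₁ : ℝ) (hc₀ : 0 < c₀) (hc₁ : 0 < c₁) (h : 1 < c₀ * c₁)
    (x y : EuclideanSpace ℝ (Fin (ℓ - 1)) × ℝ)
    (hx : c₁ * |x.2| ≤ ‖x.1‖)
    (hy : c₀ * ‖y.1‖ < y.2)
    (hxy : c₀ * ‖x.1 + y.1‖ < x.2 + y.2) :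
    ((c₀ - 1 / c₁) / 4) * ‖x.1‖ + ((c₀ * c₁ - 1) / 4) * |x.2| < y.2 := by
  have htri : ‖x.1‖ ≤ ‖x.1 + y.1‖ + ‖y.1‖ := by
    calc ‖x.1‖ = ‖(x.1 + y.1) - y.1‖ := by rw [add_sub_cancel_right]
      _ ≤ ‖x.1 + y.1‖ + ‖y.1‖ := norm_sub_le _ _
  have hb : x.2 ≤ |x.2| := le_abs_self _
  have hinv : c₁ * (1 / c₁) = 1 := by field_simp
  have hbnn : 0 ≤ |x.2| := abs_nonneg _
  nlinarith [mul_le_mul_of_nonneg_left htri hc₀.le, norm_nonneg y.1, norm_nonneg (x.1 + y.1)]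
end

section
/- Let J ≥ 0 be an integer and κ ≥ 0. Suppose M is holomorphic on a domain P ⊆ ℂ and satisfies |M^{(j)}(z)| ≤ A / min(|z|^{κ+j}, |z|^j) for all z ∈ P and 0 ≤ j ≤ J. Let Q(ζ) = ⟨ζ,ζ⟩ + ⟨ρ,ρ⟩ on the complexification of a Euclidean space a* (bilinear extension), and suppose T is a tube region on which Q takes values in P and on which |ζ| ≤ C₀ (bounded region) implies |Q(ζ)| ≤ C₀' and |ζ| ≥ C₀ implies |Q(ζ)| ≥ c|ζ|². Then there is a constant C such that for every multiindex I with |I| ≤ J and all ζ ∈ T: |D^I(M∘Q)(ζ)| ≤ C·A·|Q(ζ)|^{-κ-|I|} on the bounded part {|ζ| < C₀} of T, and |D^I(M∘Q)(ζ)| ≤ C·A·|Q(ζ)|^{-|I|/2} on the unbounded part {|ζ| ≥ C₀} of T. -/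
open Real

/-- Partial complex derivative in the `j`-th coordinate direction. -/
noncomputable def partialD {m : ℕ} (j : Fin m) (f : (Fin m → ℂ) → ℂ) : (Fin m → ℂ) → ℂ :=
  fun ζ => fderiv ℂ f ζ (Pi.single j 1)

/-- Iterated partial derivative `D^I` for a multiindex `I`. -/
noncomputable def multiD {m : ℕ} (I : Fin m → ℕ) (f : (Fin m → ℂ) → ℂ) : (Fin m → ℂ) → ℂ :=
  (List.finRange m).foldr (fun j g => (partialD j)^[I j] g) f

namespace Stmt13Aux

variable {m : ℕ}

noncomputable def QQ (ρsq : ℝ) (ζ : Fin m → ℂ) : ℂ := ∑ j, ζ j ^ 2 + (ρsq : ℂ)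

noncomputable def term (M : ℂ → ℂ) (ρsq : ℝ) (p : ℂ × (Fin m → ℕ) × ℕ) (ζ : Fin m → ℂ) : ℂ :=
  p.1 * (∏ i, ζ i ^ p.2.1 i) * iteratedDeriv p.2.2 M (QQ ρsq ζ)

noncomputable def child (j : Fin m) (p : ℂ × (Fin m → ℕ) × ℕ) : List (ℂ × (Fin m → ℕ) × ℕ) :=
  [((p.2.1 j : ℂ) * p.1, Function.update p.2.1 j (p.2.1 j - 1), p.2.2),
   (2 * p.1, Function.update p.2.1 j (p.2.1 j + 1), p.2.2 + 1)]

lemma prod_update_pow (ζ : Fin m → ℂ) (e : Fin m → ℕ) (j : Fin m) (v : ℕ) :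
    ∏ i, ζ i ^ (Function.update e j v) i
      = ζ j ^ v * ∏ i ∈ Finset.univ.erase j, ζ i ^ e i := by
  have h : (fun i => ζ i ^ (Function.update e j v) i)
      = Function.update (fun i => ζ i ^ e i) j (ζ j ^ v) := by
    funext i
    rcases eq_or_ne i j with rfl | hij
    · simp
    · simp [Function.update_of_ne hij]
  rw [h, Finset.prod_update_of_mem (Finset.mem_univ j)]
  simp [Finset.sdiff_singleton_eq_erase]

lemma analyticIter {M : ℂ → ℂ} {P : Set ℂ} (hPopen : IsOpen P)
    (hM : DifferentiableOn ℂ M P) (k : ℕ) :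
    AnalyticOnNhd ℂ (iteratedDeriv k M) P := by
  induction k with
  | zero => simpa using hM.analyticOnNhd hPopen
  | succ k ih => rw [iteratedDeriv_succ]; exact ih.deriv

lemma term_hasFDerivAt {M : ℂ → ℂ} {P : Set ℂ} (hPopen : IsOpen P)
    (hM : DifferentiableOn ℂ M P) (ρsq : ℝ) (p : ℂ × (Fin m → ℕ) × ℕ)
    (ζ : Fin m → ℂ) (hζ : QQ ρsq ζ ∈ P) (j : Fin m) :
    ∃ D : (Fin m → ℂ) →L[ℂ] ℂ, HasFDerivAt (term M ρsq p) D ζ ∧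
      D (Pi.single j 1) = ((child j p).map (fun q => term M ρsq q ζ)).sum := by
  obtain ⟨c, e, k⟩ := p
  -- derivative of the product of powers
  have hPr : HasFDerivAt (fun z : Fin m → ℂ => ∏ i, z i ^ e i)
      (∑ i, (∏ l ∈ Finset.univ.erase i, ζ l ^ e l) •
        (((e i : ℂ) * ζ i ^ (e i - 1)) • (ContinuousLinearMap.proj i : (Fin m → ℂ) →L[ℂ] ℂ))) ζ := by
    exact HasFDerivAt.finset_prod (fun i _ =>
      (hasDerivAt_pow (e i) (ζ i)).comp_hasFDerivAt ζ (hasFDerivAt_apply i ζ))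
  -- derivative of Q
  have hQ : HasFDerivAt (QQ ρsq (m := m))
      (∑ i, ((2 : ℂ) * ζ i ^ 1) • (ContinuousLinearMap.proj i : (Fin m → ℂ) →L[ℂ] ℂ)) ζ := by
    have h1 : HasFDerivAt (fun z : Fin m → ℂ => ∑ i, z i ^ 2)
        (∑ i, ((2 : ℂ) * ζ i ^ 1) • (ContinuousLinearMap.proj i : (Fin m → ℂ) →L[ℂ] ℂ)) ζ := by
      apply HasFDerivAt.fun_sum
      intro i _
      exact (hasDerivAt_pow 2 (ζ i)).comp_hasFDerivAt ζ (hasFDerivAt_apply i ζ : HasFDerivAt (fun z : Fin m → ℂ => z i) (ContinuousLinearMap.proj i : (Fin m → ℂ) →L[ℂ] ℂ) ζ)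
    exact h1.add_const ((ρsq : ℂ))
  -- derivative of iterated derivative of M at Q ζ
  have hMk : HasDerivAt (iteratedDeriv k M) (iteratedDeriv (k + 1) M (QQ ρsq ζ)) (QQ ρsq ζ) := by
    have h1 := ((analyticIter hPopen hM k) _ hζ).differentiableAt.hasDerivAt
    rwa [← iteratedDeriv_succ] at h1
  have hComp : HasFDerivAt (fun z : Fin m → ℂ => iteratedDeriv k M (QQ ρsq z))
      (iteratedDeriv (k + 1) M (QQ ρsq ζ) •
        (∑ i, ((2 : ℂ) * ζ i ^ 1) • (ContinuousLinearMap.proj i : (Fin m → ℂ) →L[ℂ] ℂ))) ζ :=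
    hMk.comp_hasFDerivAt ζ hQ
  have hc : HasFDerivAt (fun z : Fin m → ℂ => c * ∏ i, z i ^ e i)
      (c • (∑ i, (∏ l ∈ Finset.univ.erase i, ζ l ^ e l) •
        (((e i : ℂ) * ζ i ^ (e i - 1)) • (ContinuousLinearMap.proj i : (Fin m → ℂ) →L[ℂ] ℂ)))) ζ := hPr.const_mul c
  have hmul := hc.mul hComp
  refine ⟨_, hmul, ?_⟩
  · -- evaluate at Pi.single j 1
    have happ : ∀ i : Fin m, (ContinuousLinearMap.proj (R := ℂ) (φ := fun _ : Fin m => ℂ) i)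
        (Pi.single j 1) = if i = j then 1 else 0 := by
      intro i; simp [Pi.single_apply]
    simp only [ContinuousLinearMap.add_apply, ContinuousLinearMap.smul_apply,
      ContinuousLinearMap.sum_apply, happ, smul_eq_mul, mul_ite, mul_one, mul_zero,
      Finset.sum_ite_eq', Finset.mem_univ, if_true]
    rw [child]
    simp only [List.map_cons, List.map_nil, List.sum_cons, List.sum_nil, add_zero, term]
    rw [prod_update_pow, prod_update_pow]
    have hsplit : ∏ i, ζ i ^ e i = ζ j ^ e j * ∏ i ∈ Finset.univ.erase j, ζ i ^ e i :=
      (Finset.mul_prod_erase Finset.univ _ (Finset.mem_univ j)).symm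
    rw [hsplit]
    rcases Nat.eq_zero_or_pos (e j) with h0 | hpos
    · simp [h0]; ring
    · have h1 : ζ j ^ e j = ζ j ^ (e j - 1) * ζ j := by
        conv_lhs => rw [show e j = (e j - 1) + 1 from (Nat.succ_pred_eq_of_pos hpos).symm]
        rw [pow_succ]
      have h2 : ζ j ^ (e j + 1) = ζ j ^ (e j - 1) * ζ j ^ 2 := by
        rw [← pow_add]
        congr 1
        omega
      rw [h1, h2]
      ring

lemma step {M : ℂ → ℂ} {P : Set ℂ} (hPopen : IsOpen P)
    (hM : DifferentiableOn ℂ M P) (ρsq : ℝ) {T : Set (Fin m → ℂ)} (hT : IsOpen T)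
    (hQT : ∀ ζ ∈ T, QQ ρsq ζ ∈ P) (L : List (ℂ × (Fin m → ℕ) × ℕ))
    (f : (Fin m → ℂ) → ℂ) (j : Fin m)
    (hf : ∀ ζ ∈ T, f ζ = (L.map (fun p => term M ρsq p ζ)).sum) :
    ∀ ζ ∈ T, partialD j f ζ = ((L.flatMap (child j)).map (fun p => term M ρsq p ζ)).sum := by
  intro ζ hζ
  have key : ∀ L' : List (ℂ × (Fin m → ℕ) × ℕ), ∃ D : (Fin m → ℂ) →L[ℂ] ℂ,
      HasFDerivAt (fun z => (L'.map (fun p => term M ρsq p z)).sum) D ζ ∧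
      D (Pi.single j 1) = ((L'.flatMap (child j)).map (fun p => term M ρsq p ζ)).sum := by
    intro L'
    induction L' with
    | nil => exact ⟨0, by simpa using hasFDerivAt_const (0 : ℂ) ζ, by simp⟩
    | cons p t ih =>
      obtain ⟨Dt, hDt, hDt'⟩ := ih
      obtain ⟨Dp, hDp, hDp'⟩ := term_hasFDerivAt hPopen hM ρsq p ζ (hQT ζ hζ) j
      refine ⟨Dp + Dt, ?_, ?_⟩
      · exact hDp.add hDt
      · simp [List.flatMap_cons, hDp', hDt']
  obtain ⟨D, hD, hD'⟩ := key L
  have hev : f =ᶠ[nhds ζ] fun z => (L.map (fun p => term M ρsq p z)).sum :=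
    Filter.eventuallyEq_of_mem (hT.mem_nhds hζ) hf
  show fderiv ℂ f ζ (Pi.single j 1) = _
  rw [hev.fderiv_eq, hD.fderiv, hD']

lemma sum_map_flatMap {α β : Type*} (l : List α) (g : α → List β) (f : β → ℝ) :
    ((l.flatMap g).map f).sum = (l.map (fun a => ((g a).map f).sum)).sum := by
  induction l with
  | nil => simp
  | cons a t ih => simp [List.flatMap_cons, ih]

/-- The main structural induction. -/
lemma rep {M : ℂ → ℂ} {P : Set ℂ} (hPopen : IsOpen P)
    (hM : DifferentiableOn ℂ M P) (ρsq : ℝ) {T : Set (Fin m → ℂ)} (hT : IsOpen T)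
    (hQT : ∀ ζ ∈ T, QQ ρsq ζ ∈ P) (J : ℕ) :
    ∀ l : List (Fin m), l.length ≤ J →
      ∃ L : List (ℂ × (Fin m → ℕ) × ℕ),
        (∀ p ∈ L, p.1 = 0 ∨ ((∑ i, p.2.1 i) + l.length = 2 * p.2.2 ∧ p.2.2 ≤ l.length)) ∧
        (L.map (fun p => ‖p.1‖)).sum ≤ (2 * (J : ℝ) + 2) ^ l.length ∧
        ∀ ζ ∈ T, l.foldr (fun j g => partialD j g) (fun z => M (QQ ρsq z)) ζ
          = (L.map (fun p => term M ρsq p ζ)).sum := by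
  intro l
  induction l with
  | nil =>
    intro _
    refine ⟨[(1, fun _ => 0, 0)], ?_, ?_, ?_⟩
    · rintro p hp
      simp only [List.mem_singleton] at hp
      subst hp
      right
      simp
    · simp
    · intro ζ hζ
      simp [term]
  | cons j t ih =>
    intro hlen
    obtain ⟨L, hinv, hcoeff, hform⟩ := ih (by simpa using Nat.le_of_succ_le hlen)
    refine ⟨L.flatMap (child j), ?_, ?_, ?_⟩
    · rintro q hq
      rw [List.mem_flatMap] at hq
      obtain ⟨p, hp, hq⟩ := hq
      obtain ⟨c, e, k⟩ := p
      have h2 : ∑ i, e i = e j + ∑ i ∈ Finset.univ.erase j, e i :=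
        (Finset.add_sum_erase Finset.univ e (Finset.mem_univ j)).symm
      rcases hinv _ hp with hc0 | hsk
      · -- zero coefficient: both children have zero coefficient
        have hc : c = 0 := hc0
        simp only [child, List.mem_cons, List.mem_singleton] at hq
        rcases hq with rfl | hq
        · left; dsimp only; rw [hc, mul_zero]
        · rcases hq with rfl | h
          · left; dsimp only; rw [hc, mul_zero]
          · exact absurd h List.not_mem_nil
      · have hsum : ∑ i, e i + t.length = 2 * k := hsk.1
        have hk : k ≤ t.length := hsk.2
        rw [h2] at hsum
        simp only [child, List.mem_cons, List.mem_singleton] at hq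
        rcases hq with rfl | hq
        · -- first child
          rcases Nat.eq_zero_or_pos (e j) with h0 | hpos
          · left; dsimp only; rw [h0]; simp
          · right
            dsimp only
            have h1 : ∑ i, (Function.update e j (e j - 1)) i
                = (e j - 1) + ∑ i ∈ Finset.univ.erase j, e i := by
              rw [Finset.sum_update_of_mem (Finset.mem_univ j)]
              simp [Finset.sdiff_singleton_eq_erase]
            simp only [List.length_cons]
            rw [h1]
            omega
        · rcases hq with rfl | h
          · -- second child
            right
            dsimp only
            have h1 : ∑ i, (Function.update e j (e j + 1)) i
                = (e j + 1) + ∑ i ∈ Finset.univ.erase j, e i := by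
              rw [Finset.sum_update_of_mem (Finset.mem_univ j)]
              simp [Finset.sdiff_singleton_eq_erase]
            simp only [List.length_cons]
            rw [h1]
            omega
          · exact absurd h List.not_mem_nil
    · -- coefficient bound
      rw [sum_map_flatMap]
      have hstep : ∀ p ∈ L, (((child j p).map (fun q => ‖q.1‖)).sum : ℝ)
          ≤ (2 * (J : ℝ) + 2) * ‖p.1‖ := by
        intro p hp
        obtain ⟨c, e, k⟩ := p
        simp only [child, List.map_cons, List.map_nil, List.sum_cons, List.sum_nil, add_zero]
        rcases hinv _ hp with hc0 | hsk
        · have hc : c = 0 := hc0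
          simp [hc]
        · have hsum : ∑ i, e i + t.length = 2 * k := hsk.1
          have hk : k ≤ t.length := hsk.2
          have hej : (e j : ℝ) ≤ 2 * (J : ℝ) := by
            have h1 : e j ≤ ∑ i, e i := Finset.single_le_sum (f := fun i => e i)
              (fun i _ => Nat.zero_le _) (Finset.mem_univ j)
            have h2 : ∑ i, e i ≤ t.length := by omega
            have h3 : t.length ≤ J := by simpa using Nat.le_of_succ_le hlen
            have : (e j : ℝ) ≤ (J : ℝ) := by exact_mod_cast le_trans h1 (le_trans h2 h3)
            nlinarith [Nat.cast_nonneg (α := ℝ) J]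
          have habs : ‖(e j : ℂ) * c‖ = (e j : ℝ) * ‖c‖ := by
            rw [norm_mul]
            congr 1
            rw [Complex.norm_natCast]
          have habs2 : ‖2 * c‖ = 2 * ‖c‖ := by
            rw [norm_mul]
            simp
          rw [habs, habs2]
          have h0 : (0 : ℝ) ≤ ‖c‖ := norm_nonneg c
          nlinarith
      calc (L.map fun p => ((child j p).map (fun q => ‖q.1‖)).sum).sum
          ≤ (L.map fun p => (2 * (J : ℝ) + 2) * ‖p.1‖).sum := by
            apply List.sum_le_sum
            intro p hp
            exact hstep p hp
        _ = (2 * (J : ℝ) + 2) * (L.map fun p => ‖p.1‖).sum := by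
            rw [← List.sum_map_mul_left]
        _ ≤ (2 * (J : ℝ) + 2) * (2 * (J : ℝ) + 2) ^ t.length := by
            apply mul_le_mul_of_nonneg_left hcoeff
            positivity
        _ = (2 * (J : ℝ) + 2) ^ (j :: t).length := by
            rw [List.length_cons, pow_succ]
            ring
    · intro ζ hζ
      have := step hPopen hM ρsq hT hQT L
        (t.foldr (fun j g => partialD j g) (fun z => M (QQ ρsq z))) j hform ζ hζ
      simpa using this

lemma foldr_replicate (j : Fin m) (n : ℕ) (g : (Fin m → ℂ) → ℂ) :
    (List.replicate n j).foldr (fun j g => partialD j g) g = (partialD j)^[n] g := by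
  induction n with
  | zero => simp
  | succ n ih =>
    rw [List.replicate_succ, List.foldr_cons, ih, Function.iterate_succ_apply']

noncomputable def listOf (I : Fin m → ℕ) : List (Fin m) :=
  (List.finRange m).flatMap (fun j => List.replicate (I j) j)

lemma multiD_eq (I : Fin m → ℕ) (f : (Fin m → ℂ) → ℂ) :
    multiD I f = (listOf I).foldr (fun j g => partialD j g) f := by
  rw [multiD, listOf]
  generalize List.finRange m = l
  induction l with
  | nil => simp
  | cons j t ih =>
    rw [List.foldr_cons, List.flatMap_cons, List.foldr_append, ih, foldr_replicate]

lemma length_listOf (I : Fin m → ℕ) : (listOf I).length = ∑ j, I j := by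
  rw [listOf, List.length_flatMap, Fin.sum_univ_def]
  congr 1
  apply List.map_congr_left
  intro j _
  simp

lemma abs_list_sum (l : List ℂ) : ‖l.sum‖ ≤ (l.map (‖·‖)).sum := by
  induction l with
  | nil => simp
  | cons a t ih =>
    simp only [List.sum_cons, List.map_cons]
    exact le_trans (norm_add_le _ _) (by linarith)

lemma prod_abs_le (ζ : Fin m → ℂ) (e : Fin m → ℕ) :
    ‖∏ i, ζ i ^ e i‖ ≤ ‖ζ‖ ^ (∑ i, e i) := by
  rw [norm_prod, ← Finset.prod_pow_eq_pow_sum]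
  apply Finset.prod_le_prod
  · intro i _; positivity
  · intro i _
    rw [norm_pow]
    apply pow_le_pow_left₀ (norm_nonneg _)
    exact norm_le_pi_norm ζ i

lemma div_bound {A mn p K : ℝ} (hA : 0 ≤ A) (hmn : 0 < mn) (hp : 0 < p)
    (h : p ≤ K * mn) : A / mn ≤ K * A / p := by
  rw [div_le_div_iff₀ hmn hp]
  have hK : 0 ≤ K := by
    by_contra hK
    push_neg at hK
    nlinarith
  nlinarith

lemma bdd_case (J k s n : ℕ) (κ q w C₀ C₀' A : ℝ)
    (hκ : 0 ≤ κ) (hA : 0 ≤ A) (hq : 0 < q) (hqle : q ≤ C₀') (hw : 0 ≤ w) (hwle : w ≤ C₀)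
    (hks : s + n = 2 * k) (hk : k ≤ n) (hn : n ≤ J) :
    w ^ s * (A / min (q ^ (κ + (k : ℝ))) (q ^ (k : ℝ)))
      ≤ (max C₀ 1) ^ (2 * J) * ((max C₀' 1) ^ (κ + (J : ℝ)) * A * q ^ (-(κ + (n : ℝ)))) := by
  have hq1 : q ≤ max C₀' 1 := le_trans hqle (le_max_left _ _)
  have hmax1 : (1 : ℝ) ≤ max C₀' 1 := le_max_right _ _
  have hkn : (k : ℝ) ≤ (n : ℝ) := by exact_mod_cast hk
  have hnJ : (n : ℝ) ≤ (J : ℝ) := by exact_mod_cast hn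
  have h1 : w ^ s ≤ (max C₀ 1) ^ (2 * J) := by
    calc w ^ s ≤ (max C₀ 1) ^ s :=
          pow_le_pow_left₀ hw (le_trans hwle (le_max_left _ _)) s
      _ ≤ (max C₀ 1) ^ (2 * J) := pow_le_pow_right₀ (le_max_right _ _) (by omega)
  have hminpos : 0 < min (q ^ (κ + (k : ℝ))) (q ^ (k : ℝ)) :=
    lt_min (Real.rpow_pos_of_pos hq _) (Real.rpow_pos_of_pos hq _)
  have h2 : q ^ (κ + (n : ℝ)) ≤ (max C₀' 1) ^ (κ + (J : ℝ)) *
      min (q ^ (κ + (k : ℝ))) (q ^ (k : ℝ)) := by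
    rw [mul_min_of_nonneg _ _ (by positivity)]
    apply le_min
    · have e1 : q ^ (κ + (n : ℝ)) = q ^ ((n : ℝ) - (k : ℝ)) * q ^ (κ + (k : ℝ)) := by
        rw [← Real.rpow_add hq]; ring_nf
      rw [e1]
      apply mul_le_mul_of_nonneg_right _ (by positivity)
      calc q ^ ((n : ℝ) - (k : ℝ)) ≤ (max C₀' 1) ^ ((n : ℝ) - (k : ℝ)) :=
            Real.rpow_le_rpow hq.le hq1 (by linarith)
        _ ≤ (max C₀' 1) ^ (κ + (J : ℝ)) :=
            Real.rpow_le_rpow_of_exponent_le hmax1 (by linarith)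
    · have e1 : q ^ (κ + (n : ℝ)) = q ^ (κ + (n : ℝ) - (k : ℝ)) * q ^ ((k : ℝ)) := by
        rw [← Real.rpow_add hq]; ring_nf
      rw [e1]
      apply mul_le_mul_of_nonneg_right _ (by positivity)
      calc q ^ (κ + (n : ℝ) - (k : ℝ)) ≤ (max C₀' 1) ^ (κ + (n : ℝ) - (k : ℝ)) :=
            Real.rpow_le_rpow hq.le hq1 (by linarith)
        _ ≤ (max C₀' 1) ^ (κ + (J : ℝ)) :=
            Real.rpow_le_rpow_of_exponent_le hmax1 (by linarith)
  have h3 : A / min (q ^ (κ + (k : ℝ))) (q ^ (k : ℝ))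
      ≤ (max C₀' 1) ^ (κ + (J : ℝ)) * A / q ^ (κ + (n : ℝ)) :=
    div_bound hA hminpos (Real.rpow_pos_of_pos hq _) h2
  calc w ^ s * (A / min (q ^ (κ + (k : ℝ))) (q ^ (k : ℝ)))
      ≤ (max C₀ 1) ^ (2 * J) * ((max C₀' 1) ^ (κ + (J : ℝ)) * A / q ^ (κ + (n : ℝ))) := by
        apply mul_le_mul h1 h3 (by positivity) (by positivity)
    _ = (max C₀ 1) ^ (2 * J) * ((max C₀' 1) ^ (κ + (J : ℝ)) * A * q ^ (-(κ + (n : ℝ)))) := by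
        rw [Real.rpow_neg hq.le]
        ring

lemma grow_case (J k s n : ℕ) (κ q w cc C₀ A : ℝ)
    (hκ : 0 ≤ κ) (hA : 0 ≤ A) (hcc : 0 < cc) (hC₀ : 0 < C₀) (hw : C₀ ≤ w)
    (hq2 : cc * w ^ 2 ≤ q)
    (hks : s + n = 2 * k) (hk : k ≤ n) (hn : n ≤ J) :
    w ^ s * (A / min (q ^ (κ + (k : ℝ))) (q ^ (k : ℝ)))
      ≤ (max cc⁻¹ 1) ^ ((J : ℝ)) *
        (max ((cc * C₀ ^ 2) ^ (-κ)) 1 * A * q ^ (-((n : ℝ) / 2))) := by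
  set ε := cc * C₀ ^ 2 with hεdef
  have hε : 0 < ε := by positivity
  have hw0 : 0 < w := lt_of_lt_of_le hC₀ hw
  have hεq : ε ≤ q := by
    have h1 : C₀ ^ 2 ≤ w ^ 2 := by nlinarith
    have h2 : ε ≤ cc * w ^ 2 := by rw [hεdef]; nlinarith
    linarith
  have hq : 0 < q := lt_of_lt_of_le hε hεq
  have hsn : s ≤ n := by omega
  have hkn : (k : ℝ) ≤ (n : ℝ) := by exact_mod_cast hk
  have hnJ : (n : ℝ) ≤ (J : ℝ) := by exact_mod_cast hn
  set K₃ := max (ε ^ (-κ)) 1 with hK₃def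
  have hK₃ : 1 ≤ K₃ := le_max_right _ _
  have hK₃pos : 0 < K₃ := lt_of_lt_of_le one_pos hK₃
  -- step 1 : w ^ s ≤ (max cc⁻¹ 1) ^ J * q ^ (s/2)
  have h1 : w ^ s ≤ (max cc⁻¹ 1) ^ ((J : ℝ)) * q ^ ((s : ℝ) / 2) := by
    have e1 : w ^ s = (w ^ 2) ^ ((s : ℝ) / 2) := by
      rw [show ((w ^ 2 : ℝ)) = w ^ (2 : ℝ) by
        rw [← Real.rpow_natCast w 2]; norm_num]
      rw [← Real.rpow_natCast w s, ← Real.rpow_mul hw0.le]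
      congr 1
      ring
    rw [e1]
    calc (w ^ 2) ^ ((s : ℝ) / 2) ≤ (q / cc) ^ ((s : ℝ) / 2) := by
          apply Real.rpow_le_rpow (by positivity) _ (by positivity)
          rw [le_div_iff₀ hcc]
          linarith [hq2]
      _ = q ^ ((s : ℝ) / 2) * (cc⁻¹) ^ ((s : ℝ) / 2) := by
          rw [Real.div_rpow hq.le hcc.le, Real.inv_rpow hcc.le]
          ring
      _ ≤ q ^ ((s : ℝ) / 2) * (max cc⁻¹ 1) ^ ((J : ℝ)) := by
          apply mul_le_mul_of_nonneg_left _ (by positivity)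
          calc (cc⁻¹) ^ ((s : ℝ) / 2) ≤ (max cc⁻¹ 1) ^ ((s : ℝ) / 2) :=
                Real.rpow_le_rpow (by positivity) (le_max_left _ _) (by positivity)
            _ ≤ (max cc⁻¹ 1) ^ ((J : ℝ)) := by
                apply Real.rpow_le_rpow_of_exponent_le (le_max_right _ _)
                have : (s : ℝ) ≤ (J : ℝ) := by
                  exact_mod_cast le_trans hsn hn
                linarith
      _ = (max cc⁻¹ 1) ^ ((J : ℝ)) * q ^ ((s : ℝ) / 2) := by ring
  -- step 2 : lower bound on the min
  have hqκ : K₃⁻¹ ≤ q ^ κ := by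
    rcases le_or_gt 1 q with h | h
    · calc K₃⁻¹ ≤ 1 := inv_le_one_of_one_le₀ hK₃
        _ ≤ q ^ κ := Real.one_le_rpow h hκ
    · have h1 : (ε ^ κ)⁻¹ ≤ K₃ := by
        rw [← Real.rpow_neg hε.le]
        exact le_max_left _ _
      have h2 : K₃⁻¹ ≤ ε ^ κ := by
        have := inv_anti₀ (by positivity : (0:ℝ) < (ε ^ κ)⁻¹) h1
        rwa [inv_inv] at this
      exact le_trans h2 (Real.rpow_le_rpow hε.le hεq hκ)
  have h2 : q ^ ((k : ℝ)) ≤ K₃ * min (q ^ (κ + (k : ℝ))) (q ^ (k : ℝ)) := by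
    rw [mul_min_of_nonneg _ _ hK₃pos.le]
    apply le_min
    · rw [Real.rpow_add hq]
      calc q ^ ((k : ℝ)) = 1 * q ^ ((k : ℝ)) := (one_mul _).symm
        _ ≤ (K₃ * q ^ κ) * q ^ ((k : ℝ)) := by
            apply mul_le_mul_of_nonneg_right _ (by positivity)
            calc (1 : ℝ) = K₃ * K₃⁻¹ := (mul_inv_cancel₀ hK₃pos.ne').symm
              _ ≤ K₃ * q ^ κ := mul_le_mul_of_nonneg_left hqκ hK₃pos.le
        _ = K₃ * (q ^ κ * q ^ ((k : ℝ))) := by ring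
    · calc q ^ ((k : ℝ)) = 1 * q ^ ((k : ℝ)) := (one_mul _).symm
        _ ≤ K₃ * q ^ ((k : ℝ)) := mul_le_mul_of_nonneg_right hK₃ (by positivity)
  have hminpos : 0 < min (q ^ (κ + (k : ℝ))) (q ^ (k : ℝ)) :=
    lt_min (Real.rpow_pos_of_pos hq _) (Real.rpow_pos_of_pos hq _)
  have h3 : A / min (q ^ (κ + (k : ℝ))) (q ^ (k : ℝ)) ≤ K₃ * A / q ^ ((k : ℝ)) :=
    div_bound hA hminpos (Real.rpow_pos_of_pos hq _) h2
  have hexp : (s : ℝ) / 2 + (-(k : ℝ)) = -((n : ℝ) / 2) := by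
    have hc : (s : ℝ) + (n : ℝ) = 2 * (k : ℝ) := by exact_mod_cast hks
    linarith
  calc w ^ s * (A / min (q ^ (κ + (k : ℝ))) (q ^ (k : ℝ)))
      ≤ ((max cc⁻¹ 1) ^ ((J : ℝ)) * q ^ ((s : ℝ) / 2)) * (K₃ * A / q ^ ((k : ℝ))) := by
        apply mul_le_mul h1 h3 (by positivity) (by positivity)
    _ = (max cc⁻¹ 1) ^ ((J : ℝ)) * (K₃ * A * (q ^ ((s : ℝ) / 2) * (q ^ ((k : ℝ)))⁻¹)) := by
        ring
    _ = (max cc⁻¹ 1) ^ ((J : ℝ)) * (K₃ * A * q ^ (-((n : ℝ) / 2))) := by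
        rw [← Real.rpow_neg hq.le, ← Real.rpow_add hq, hexp]

end Stmt13Aux

open Stmt13Aux

/-- Proposition 3.5: Mihlin–Hörmander type estimates for `M ∘ Q` where
`Q(ζ) = Σ ζ_j² + ⟨ρ,ρ⟩` and `M` satisfies `|M^{(j)}(z)| ≤ A / min(|z|^{κ+j}, |z|^j)`. -/
theorem stmt13 (m J : ℕ) (κ : ℝ) (hκ : 0 ≤ κ) (ρsq : ℝ)
    (M : ℂ → ℂ) (P : Set ℂ) (hPopen : IsOpen P) (hM : DifferentiableOn ℂ M P)
    (A : ℝ) (hA : 0 < A)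
    (hMbound : ∀ z ∈ P, ∀ j : ℕ, j ≤ J →
      ‖iteratedDeriv j M z‖ ≤
        A / min (‖z‖ ^ (κ + (j : ℝ))) (‖z‖ ^ (j : ℝ)))
    (T : Set (Fin m → ℂ)) (hT : IsOpen T)
    (hQT : ∀ ζ ∈ T, (∑ j, ζ j ^ 2 + (ρsq : ℂ)) ∈ P)
    (C₀ C₀' cc : ℝ) (hC₀ : 0 < C₀) (hcc : 0 < cc)
    (hbdd : ∀ ζ ∈ T, ‖ζ‖ ≤ C₀ → ‖∑ j, ζ j ^ 2 + (ρsq : ℂ)‖ ≤ C₀')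
    (hgrow : ∀ ζ ∈ T, C₀ ≤ ‖ζ‖ → cc * ‖ζ‖ ^ 2 ≤ ‖∑ j, ζ j ^ 2 + (ρsq : ℂ)‖) :
    ∃ C : ℝ, 0 < C ∧ ∀ I : Fin m → ℕ, (∑ j, I j) ≤ J → ∀ ζ ∈ T,
      (‖ζ‖ < C₀ →
        ‖multiD I (fun z => M (∑ j, z j ^ 2 + (ρsq : ℂ))) ζ‖ ≤
          C * A * ‖∑ j, ζ j ^ 2 + (ρsq : ℂ)‖ ^ (-(κ + ∑ j, (I j : ℝ)))) ∧
      (C₀ ≤ ‖ζ‖ →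
        ‖multiD I (fun z => M (∑ j, z j ^ 2 + (ρsq : ℂ))) ζ‖ ≤
          C * A * ‖∑ j, ζ j ^ 2 + (ρsq : ℂ)‖ ^ (-((∑ j, (I j : ℝ)) / 2))) := by
  have hQT' : ∀ ζ ∈ T, QQ ρsq ζ ∈ P := hQT
  set Kb : ℝ := (max C₀ 1) ^ (2 * J) * (max C₀' 1) ^ (κ + (J : ℝ)) with hKb
  set Kg : ℝ := (max cc⁻¹ 1) ^ ((J : ℝ)) * max ((cc * C₀ ^ 2) ^ (-κ)) 1 with hKg
  set Ccoef : ℝ := (2 * (J : ℝ) + 2) ^ J with hCcoef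
  have hKbnn : 0 ≤ Kb := by positivity
  have hKgnn : 0 ≤ Kg := by positivity
  have hCcoefpos : 0 < Ccoef := by positivity
  refine ⟨Ccoef * (Kb + Kg + 1), by positivity, ?_⟩
  intro I hI ζ hζ
  set n : ℕ := ∑ j, I j with hn
  set q : ℝ := ‖∑ j, ζ j ^ 2 + (ρsq : ℂ)‖ with hq
  have hqnn : 0 ≤ q := norm_nonneg _
  have hcast : ∑ j, ((I j : ℝ)) = ((n : ℕ) : ℝ) := by rw [hn]; push_cast; ring
  obtain ⟨L, hinv, hcoeff, hform⟩ := rep hPopen hM ρsq hT hQT' J (listOf I)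
    (by rw [length_listOf]; exact hI)
  rw [length_listOf] at hinv hcoeff
  have hmd : multiD I (fun z => M (∑ j, z j ^ 2 + (ρsq : ℂ))) ζ
      = (L.map (fun p => term M ρsq p ζ)).sum := by
    rw [multiD_eq]
    exact hform ζ hζ
  have habs : ‖multiD I (fun z => M (∑ j, z j ^ 2 + (ρsq : ℂ))) ζ‖
      ≤ (L.map (fun p => ‖term M ρsq p ζ‖)).sum := by
    rw [hmd]
    have := abs_list_sum (L.map (fun p => term M ρsq p ζ))
    rwa [List.map_map] at this
  have hS : (L.map (fun p => ‖p.1‖)).sum ≤ Ccoef := by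
    calc (L.map (fun p => ‖p.1‖)).sum ≤ (2 * (J : ℝ) + 2) ^ n := hcoeff
      _ ≤ Ccoef := by
          apply pow_le_pow_right₀ _ hI
          have := Nat.cast_nonneg (α := ℝ) J
          linarith
  -- the common skeleton
  have skeleton : ∀ B : ℝ, 0 ≤ B →
      (∀ s k : ℕ, s + n = 2 * k → k ≤ n →
        ‖ζ‖ ^ s * (A / min (q ^ (κ + (k : ℝ))) (q ^ ((k : ℝ)))) ≤ B) →
      ‖multiD I (fun z => M (∑ j, z j ^ 2 + (ρsq : ℂ))) ζ‖ ≤ Ccoef * B := by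
    intro B hBnn hB
    have hterm : ∀ p ∈ L, ‖term M ρsq p ζ‖ ≤ ‖p.1‖ * B := by
      intro p hp
      obtain ⟨c, e, k⟩ := p
      rcases hinv _ hp with hc0 | hsk
      · have hc : c = 0 := hc0
        simp [term, hc, hBnn]
      · have hsum : ∑ i, e i + n = 2 * k := hsk.1
        have hk : k ≤ n := hsk.2
        have hkJ : k ≤ J := le_trans hk hI
        have t1 : ‖∏ i, ζ i ^ e i‖ ≤ ‖ζ‖ ^ (∑ i, e i) := prod_abs_le ζ e
        have t2 : ‖iteratedDeriv k M (QQ ρsq ζ)‖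
            ≤ A / min (q ^ (κ + (k : ℝ))) (q ^ ((k : ℝ))) :=
          hMbound _ (hQT ζ hζ) k hkJ
        calc ‖term M ρsq (c, e, k) ζ‖
            = ‖c‖ * (‖∏ i, ζ i ^ e i‖
                * ‖iteratedDeriv k M (QQ ρsq ζ)‖) := by
              rw [term, norm_mul, norm_mul]; ring
          _ ≤ ‖c‖ * (‖ζ‖ ^ (∑ i, e i)
                * (A / min (q ^ (κ + (k : ℝ))) (q ^ ((k : ℝ))))) := by
              apply mul_le_mul_of_nonneg_left _ (norm_nonneg c)
              exact mul_le_mul t1 t2 (norm_nonneg _) (by positivity)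
          _ ≤ ‖c‖ * B :=
              mul_le_mul_of_nonneg_left (hB _ k hsum hk) (norm_nonneg c)
    calc ‖multiD I (fun z => M (∑ j, z j ^ 2 + (ρsq : ℂ))) ζ‖
        ≤ (L.map (fun p => ‖term M ρsq p ζ‖)).sum := habs
      _ ≤ (L.map (fun p => ‖p.1‖ * B)).sum := List.sum_le_sum hterm
      _ = (L.map (fun p => ‖p.1‖)).sum * B := by
          rw [← List.sum_map_mul_right]
      _ ≤ Ccoef * B := mul_le_mul_of_nonneg_right hS hBnn
  constructor
  · -- bounded part
    intro hb
    rw [hcast]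
    rcases eq_or_lt_of_le hqnn with hq0 | hqpos
    · -- q = 0
      by_cases hκn : κ + ((n : ℕ) : ℝ) = 0
      · -- κ = 0 and n = 0 : the exponent is zero
        have hncast : (0 : ℝ) ≤ ((n : ℕ) : ℝ) := Nat.cast_nonneg n
        have hκ0 : κ = 0 := by linarith
        have hn0 : n = 0 := by exact_mod_cast (by linarith : ((n : ℕ) : ℝ) = 0)
        rw [hκn, neg_zero, Real.rpow_zero, mul_one]
        have key := skeleton A hA.le ?_
        · calc ‖multiD I (fun z => M (∑ j, z j ^ 2 + (ρsq : ℂ))) ζ‖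
              ≤ Ccoef * A := key
            _ ≤ Ccoef * (Kb + Kg + 1) * A := by
                nlinarith [mul_nonneg (mul_nonneg hCcoefpos.le (add_nonneg hKbnn hKgnn)) hA.le]
        · intro s k hsk hk
          have hk0 : k = 0 := by omega
          have hs0 : s = 0 := by omega
          subst hk0 hs0
          simp [hκ0]
      · -- the right-hand side is zero and every term vanishes
        have hne : -(κ + ((n : ℕ) : ℝ)) ≠ 0 := neg_ne_zero.mpr hκn
        have habs0 : ‖QQ ρsq ζ‖ = 0 := hq ▸ hq0.symm
        have hsum0 : (L.map (fun p => term M ρsq p ζ)).sum = 0 := by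
          apply List.sum_eq_zero
          intro x hx
          rw [List.mem_map] at hx
          obtain ⟨p, hp, rfl⟩ := hx
          obtain ⟨c, e, k⟩ := p
          rcases hinv _ hp with hc0 | hsk
          · have hc : c = 0 := hc0
            simp [term, hc]
          · have hsum : ∑ i, e i + n = 2 * k := hsk.1
            have hk : k ≤ n := hsk.2
            have hz : iteratedDeriv k M (QQ ρsq ζ) = 0 := by
              have hb2 := hMbound _ (hQT ζ hζ) k (le_trans hk hI)
              have hb3 : ‖iteratedDeriv k M (QQ ρsq ζ)‖
                  ≤ A / min ((0:ℝ) ^ (κ + (k : ℝ))) ((0:ℝ) ^ ((k : ℝ))) := by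
                rw [← habs0]
                exact hb2
              rcases Nat.eq_zero_or_pos k with hk0 | hkpos
              · subst hk0
                have hκne : κ ≠ 0 := by
                  intro h
                  apply hκn
                  have : n = 0 := by omega
                  rw [h, this]
                  simp
                rw [Real.zero_rpow (by simpa using hκne)] at hb3
                simp only [Nat.cast_zero, Real.rpow_zero] at hb3
                rw [min_eq_left (by norm_num)] at hb3
                rw [div_zero] at hb3
                exact norm_eq_zero.mp (le_antisymm hb3 (norm_nonneg _))
              · have hk1 : ((k : ℝ)) ≠ 0 := by
                  simpa using Nat.pos_iff_ne_zero.mp hkpos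
                have hk2 : κ + (k : ℝ) ≠ 0 := by
                  have : (0:ℝ) < (k : ℝ) := by exact_mod_cast hkpos
                  intro h; linarith
                rw [Real.zero_rpow hk1, Real.zero_rpow hk2] at hb3
                rw [min_self, div_zero] at hb3
                exact norm_eq_zero.mp (le_antisymm hb3 (norm_nonneg _))
            simp [term, hz]
        rw [hmd, hsum0]
        rw [show q = 0 from hq0.symm, Real.zero_rpow hne, mul_zero]
        simp
    · -- q > 0
      have hqle : q ≤ C₀' := hbdd ζ hζ hb.le
      have key := skeleton
        ((max C₀ 1) ^ (2 * J) * ((max C₀' 1) ^ (κ + (J : ℝ)) * A * q ^ (-(κ + ((n : ℕ) : ℝ)))))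
        (by positivity) ?_
      · calc ‖multiD I (fun z => M (∑ j, z j ^ 2 + (ρsq : ℂ))) ζ‖
            ≤ Ccoef * ((max C₀ 1) ^ (2 * J) *
              ((max C₀' 1) ^ (κ + (J : ℝ)) * A * q ^ (-(κ + ((n : ℕ) : ℝ))))) := key
          _ = (Ccoef * Kb) * (A * q ^ (-(κ + ((n : ℕ) : ℝ)))) := by rw [hKb]; ring
          _ ≤ (Ccoef * (Kb + Kg + 1)) * (A * q ^ (-(κ + ((n : ℕ) : ℝ)))) := by
              apply mul_le_mul_of_nonneg_right _ (by positivity)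
              nlinarith
          _ = Ccoef * (Kb + Kg + 1) * A * q ^ (-(κ + ((n : ℕ) : ℝ))) := by ring
      · intro s k hsk hk
        exact bdd_case J k s n κ q ‖ζ‖ C₀ C₀' A hκ hA.le hqpos hqle (norm_nonneg ζ)
          hb.le hsk hk hI
  · -- growth part
    intro hb
    rw [hcast]
    have hq2 : cc * ‖ζ‖ ^ 2 ≤ q := hgrow ζ hζ hb
    have key := skeleton
      ((max cc⁻¹ 1) ^ ((J : ℝ)) *
        (max ((cc * C₀ ^ 2) ^ (-κ)) 1 * A * q ^ (-(((n : ℕ) : ℝ) / 2))))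
      (by positivity) ?_
    · calc ‖multiD I (fun z => M (∑ j, z j ^ 2 + (ρsq : ℂ))) ζ‖
          ≤ Ccoef * ((max cc⁻¹ 1) ^ ((J : ℝ)) *
            (max ((cc * C₀ ^ 2) ^ (-κ)) 1 * A * q ^ (-(((n : ℕ) : ℝ) / 2)))) := key
        _ = (Ccoef * Kg) * (A * q ^ (-(((n : ℕ) : ℝ) / 2))) := by rw [hKg]; ring
        _ ≤ (Ccoef * (Kb + Kg + 1)) * (A * q ^ (-(((n : ℕ) : ℝ) / 2))) := by
            apply mul_le_mul_of_nonneg_right _ (by positivity)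
            nlinarith
        _ = Ccoef * (Kb + Kg + 1) * A * q ^ (-(((n : ℕ) : ℝ) / 2)) := by ring
    · intro s k hsk hk
      exact grow_case J k s n κ q ‖ζ‖ cc C₀ A hκ hA.le hcc hC₀ hb hq2 hsk hk hI
end

section
/- Let ℓ ≥ 2 and |ρ| > 0. Define τ'(H', H_ℓ) = (1 + |H'|)^{1-ℓ} e^{-2|ρ| H_ℓ} for H = (H', H_ℓ) in the region R = {H : H_ℓ ≤ |H'|², |H'| < c₀ H_ℓ} (and τ' = 0 elsewhere), with respect to the measure dμ(H) = e^{2|ρ| H_ℓ} dH on the positive cone. Then τ' is not in weak-L¹(μ): writing Ω_t = {H ∈ R : τ'(H) > t}, one has sup_{t>0} t·μ(Ω_t) = ∞. -/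
open MeasureTheory Real

set_option maxHeartbeats 1000000 in
/-- the kernel `τ'(H) = (1+|H'|)^{1-ℓ} e^{-2|ρ|H_ℓ}` supported on
`R = {H_ℓ ≤ |H'|², |H'| < c₀ H_ℓ}` is not in weak-`L¹` with respect to
`dμ(H) = e^{2|ρ|H_ℓ} dH`. -/
theorem stmt14 (ℓ : ℕ) (hℓ : 2 ≤ ℓ) (r c₀ : ℝ) (hr : 0 < r) (hc₀ : 0 < c₀) :
    ⨆ t ∈ Set.Ioi (0 : ℝ),
      ENNReal.ofReal t *
        (volume.withDensity (fun H : EuclideanSpace ℝ (Fin (ℓ - 1)) × ℝ =>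
            ENNReal.ofReal (Real.exp (2 * r * H.2))))
          {H : EuclideanSpace ℝ (Fin (ℓ - 1)) × ℝ |
            t < (if H.2 ≤ ‖H.1‖ ^ 2 ∧ ‖H.1‖ < c₀ * H.2 then
                  (1 + ‖H.1‖) ^ ((1 : ℝ) - (ℓ : ℝ)) * Real.exp (-2 * r * H.2)
                else 0)} = ⊤ := by
  classical
  set n : ℕ := ℓ - 1 with hn_def
  have hn1 : 1 ≤ n := by omega
  have hnR : (1 : ℝ) ≤ (n : ℝ) := by exact_mod_cast hn1
  have hnpos : (0 : ℝ) < (n : ℝ) := by linarith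
  haveI : Nonempty (Fin n) := ⟨⟨0, by omega⟩⟩
  have hcastn : ((1 : ℝ) - (ℓ : ℝ)) = -(n : ℝ) := by
    have h1 : (1 : ℕ) ≤ ℓ := by omega
    rw [hn_def]
    push_cast [Nat.cast_sub h1]
    ring
  set μ := volume.withDensity (fun H : EuclideanSpace ℝ (Fin n) × ℝ =>
      ENNReal.ofReal (Real.exp (2 * r * H.2))) with hμ_def
  rw [iSup_eq_top]
  intro b hb
  -- constants
  set Cr : ℝ := Real.sqrt π ^ n / Real.Gamma (n / 2 + 1) with hCr_def
  have hCr : 0 < Cr := by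
    apply div_pos (pow_pos (Real.sqrt_pos.2 Real.pi_pos) n)
    exact Real.Gamma_pos_of_pos (by positivity)
  set c : ℝ := Real.exp (-(2 * r)) * (((1:ℝ)/2) ^ n - ((1:ℝ)/4) ^ n) * Cr with hc_def
  have hhalf : ((1:ℝ)/4) ^ n < ((1:ℝ)/2) ^ n :=
    pow_lt_pow_left₀ (by norm_num) (by norm_num) (by omega)
  have hc : 0 < c := by
    apply mul_pos (mul_pos (Real.exp_pos _) (by linarith)) hCr
  -- choose K
  obtain ⟨K, hKgt⟩ : ∃ K : ℕ, b.toReal / c < K := exists_nat_gt _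
  have hK : b < ENNReal.ofReal (K * c) := by
    rw [ENNReal.lt_ofReal_iff_toReal_lt hb.ne]
    rw [div_lt_iff₀ hc] at hKgt
    linarith
  -- choose σ, t, y
  set σ : ℝ := (K : ℝ) + (8 * Real.exp (2 * r * K) / c₀) ^ 2 + 1 with hσ_def
  have hσ1 : (1 : ℝ) ≤ σ := by
    have h1 : (0:ℝ) ≤ (K : ℝ) := Nat.cast_nonneg K
    have h2 : (0:ℝ) ≤ (8 * Real.exp (2 * r * K) / c₀) ^ 2 := sq_nonneg _
    rw [hσ_def]; linarith
  have hσpos : (0 : ℝ) < σ := by linarith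
  have hσK : (K : ℝ) ≤ σ := by
    have h2 : (0:ℝ) ≤ (8 * Real.exp (2 * r * K) / c₀) ^ 2 := sq_nonneg _
    rw [hσ_def]; linarith
  have hsqσ : Real.sqrt σ * Real.sqrt σ = σ := Real.mul_self_sqrt hσpos.le
  have hsqσ1 : (1 : ℝ) ≤ Real.sqrt σ := by
    rw [show (1:ℝ) = Real.sqrt 1 from Real.sqrt_one.symm]
    exact Real.sqrt_le_sqrt hσ1
  have h8 : 8 * Real.exp (2 * r * K) ≤ c₀ * Real.sqrt σ := by
    have h1 : 8 * Real.exp (2 * r * K) / c₀ ≤ Real.sqrt σ := by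
      rw [show 8 * Real.exp (2 * r * ↑K) / c₀
          = Real.sqrt ((8 * Real.exp (2 * r * ↑K) / c₀) ^ 2) from
          (Real.sqrt_sq (by positivity)).symm]
      apply Real.sqrt_le_sqrt
      have h1 : (0:ℝ) ≤ (K : ℝ) := Nat.cast_nonneg K
      rw [hσ_def]; linarith
    calc 8 * Real.exp (2 * r * K) = c₀ * (8 * Real.exp (2 * r * K) / c₀) := by
          field_simp
      _ ≤ c₀ * Real.sqrt σ := mul_le_mul_of_nonneg_left h1 hc₀.le
  set t : ℝ := Real.exp (-(2 * r * σ)) / (c₀ * σ) ^ n with ht_def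
  have hcσ : (0:ℝ) < c₀ * σ := mul_pos hc₀ hσpos
  have htpos : 0 < t := by rw [ht_def]; positivity
  set y : ℕ → ℝ := fun k => c₀ * σ * Real.exp (-(2 * r * ((k : ℝ) + 1)) / n) with hy_def
  have hypos : ∀ k, 0 < y k := fun k => by rw [hy_def]; positivity
  have hid : ∀ k : ℕ, t * y k ^ n = Real.exp (-(2 * r * (σ + (k : ℝ) + 1))) := by
    intro k
    have h1 : Real.exp (-(2 * r * ((k:ℝ) + 1)) / n) ^ n
        = Real.exp (-(2 * r * ((k:ℝ) + 1))) := by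
      rw [← Real.exp_nat_mul]
      congr 1
      field_simp
    rw [ht_def, hy_def]
    simp only [mul_pow, h1]
    rw [show Real.exp (-(2 * r * (σ + (k:ℝ) + 1)))
        = Real.exp (-(2 * r * σ)) * Real.exp (-(2 * r * ((k:ℝ) + 1))) from by
      rw [← Real.exp_add]; congr 1; ring]
    have hne : (c₀ : ℝ) ^ n * σ ^ n ≠ 0 := by positivity
    field_simp
  have hy8 : ∀ k, k < K → 8 * Real.sqrt σ ≤ y k := by
    intro k hk
    have hk1 : (k : ℝ) + 1 ≤ (K : ℝ) := by exact_mod_cast Nat.succ_le_of_lt hk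
    have hexp : Real.exp (-(2 * r * K)) ≤ Real.exp (-(2 * r * ((k:ℝ) + 1)) / n) := by
      apply Real.exp_le_exp.2
      rw [le_div_iff₀ hnpos]
      have h2r : (0:ℝ) < 2 * r := by linarith
      have ha : 2 * r * ((k:ℝ) + 1) ≤ 2 * r * K := mul_le_mul_of_nonneg_left hk1 h2r.le
      have hb2 : 2 * r * (K:ℝ) ≤ 2 * r * K * n :=
        le_mul_of_one_le_right (by positivity) hnR
      linarith
    have h1 : c₀ * σ * Real.exp (-(2 * r * K)) ≤ y k := by
      rw [hy_def]
      exact mul_le_mul_of_nonneg_left hexp (by positivity)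
    have hE : Real.exp (2 * r * K) * Real.exp (-(2 * r * K)) = 1 := by
      rw [← Real.exp_add]; simp
    have h2 : 8 * Real.sqrt σ ≤ c₀ * σ * Real.exp (-(2 * r * K)) := by
      have h3 := mul_le_mul_of_nonneg_right h8
        (mul_nonneg (Real.sqrt_nonneg σ) (Real.exp_pos (-(2 * r * K))).le)
      have e1 : 8 * Real.exp (2 * r * ↑K) * (Real.sqrt σ * Real.exp (-(2 * r * ↑K)))
          = 8 * Real.sqrt σ := by
        calc 8 * Real.exp (2 * r * ↑K) * (Real.sqrt σ * Real.exp (-(2 * r * ↑K)))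
            = 8 * Real.sqrt σ * (Real.exp (2 * r * ↑K) * Real.exp (-(2 * r * ↑K))) := by ring
          _ = 8 * Real.sqrt σ := by rw [hE, mul_one]
      have e2 : c₀ * Real.sqrt σ * (Real.sqrt σ * Real.exp (-(2 * r * ↑K)))
          = c₀ * σ * Real.exp (-(2 * r * ↑K)) := by
        calc c₀ * Real.sqrt σ * (Real.sqrt σ * Real.exp (-(2 * r * ↑K)))
            = c₀ * (Real.sqrt σ * Real.sqrt σ) * Real.exp (-(2 * r * ↑K)) := by ring
          _ = c₀ * σ * Real.exp (-(2 * r * ↑K)) := by rw [hsqσ]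
      linarith [h3]
    linarith
  -- the boxes
  set A : ℕ → Set (EuclideanSpace ℝ (Fin n)) :=
    fun k => {x | y k / 4 ≤ ‖x‖ ∧ ‖x‖ < y k / 2} with hA_def
  set B : ℕ → Set (EuclideanSpace ℝ (Fin n) × ℝ) :=
    fun k => A k ×ˢ Set.Ico (σ + (k : ℝ)) (σ + (k : ℝ) + 1) with hB_def
  have hmeasA : ∀ k, MeasurableSet (A k) := by
    intro k
    exact measurable_norm measurableSet_Ico
  have hmeasB : ∀ k, MeasurableSet (B k) := fun k => (hmeasA k).prod measurableSet_Ico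
  refine ⟨t, ?_⟩
  rw [iSup_pos (Set.mem_Ioi.mpr htpos)]
  set S := {H : EuclideanSpace ℝ (Fin n) × ℝ |
      t < (if H.2 ≤ ‖H.1‖ ^ 2 ∧ ‖H.1‖ < c₀ * H.2 then
            (1 + ‖H.1‖) ^ ((1 : ℝ) - (ℓ : ℝ)) * Real.exp (-2 * r * H.2)
          else 0)} with hS_def
  -- boxes sit inside S
  have hsub : ∀ k, k < K → B k ⊆ S := by
    intro k hk H hH
    obtain ⟨⟨hx1, hx2⟩, hs1, hs2⟩ := hH
    have hk1 : (k : ℝ) + 1 ≤ (K : ℝ) := by exact_mod_cast Nat.succ_le_of_lt hk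
    have hy8' := hy8 k hk
    have hyk2 : (8:ℝ) ≤ y k := by linarith
    have hcond1 : H.2 ≤ ‖H.1‖ ^ 2 := by
      have h1 : 2 * Real.sqrt σ ≤ ‖H.1‖ := by linarith
      have h2 : 4 * σ ≤ ‖H.1‖ ^ 2 := by
        have h3 := mul_le_mul h1 h1 (by positivity) (norm_nonneg _)
        rw [pow_two]
        linarith [hsqσ, h3]
      linarith
    have hyle : y k ≤ c₀ * σ := by
      have h1 : Real.exp (-(2 * r * ((k:ℝ) + 1)) / n) ≤ 1 := by
        apply Real.exp_le_one_iff.2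
        apply div_nonpos_of_nonpos_of_nonneg _ hnpos.le
        have h9 : (0:ℝ) ≤ 2 * r * ((k:ℝ) + 1) := by positivity
        linarith
      calc y k = c₀ * σ * Real.exp (-(2 * r * ((k:ℝ) + 1)) / n) := rfl
        _ ≤ c₀ * σ * 1 := mul_le_mul_of_nonneg_left h1 hcσ.le
        _ = c₀ * σ := mul_one _
    have hcond2 : ‖H.1‖ < c₀ * H.2 := by
      have h1 : c₀ * σ ≤ c₀ * H.2 := mul_le_mul_of_nonneg_left (by linarith) hc₀.le
      linarith
    rw [hS_def, Set.mem_setOf_eq, if_pos ⟨hcond1, hcond2⟩, hcastn,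
      Real.rpow_neg (by positivity), Real.rpow_natCast, inv_mul_eq_div,
      lt_div_iff₀ (by positivity)]
    have h1x : 1 + ‖H.1‖ ≤ y k := by linarith
    calc t * (1 + ‖H.1‖) ^ n ≤ t * y k ^ n := by
          apply mul_le_mul_of_nonneg_left _ htpos.le
          exact pow_le_pow_left₀ (by positivity) h1x n
      _ = Real.exp (-(2 * r * (σ + (k:ℝ) + 1))) := hid k
      _ < Real.exp (-2 * r * H.2) := by
          apply Real.exp_lt_exp.2
          nlinarith [mul_lt_mul_of_pos_left hs2 (by linarith : (0:ℝ) < 2 * r)]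
  -- pairwise disjoint
  have hdisj : (↑(Finset.range K) : Set ℕ).PairwiseDisjoint B := by
    intro i _ j _ hij
    rw [Function.onFun, Set.disjoint_left]
    rintro p ⟨_, hpi1, hpi2⟩ ⟨_, hpj1, hpj2⟩
    have h1 : (i : ℝ) < (j : ℝ) + 1 := by linarith
    have h2 : (j : ℝ) < (i : ℝ) + 1 := by linarith
    have h1' : i < j + 1 := by exact_mod_cast h1
    have h2' : j < i + 1 := by exact_mod_cast h2
    omega
  -- per-box lower bound
  have hbox : ∀ k ∈ Finset.range K, ENNReal.ofReal c ≤ ENNReal.ofReal t * μ (B k) := by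
    intro k hk
    have hk' : k < K := Finset.mem_range.mp hk
    have hyk := hypos k
    -- annulus volume
    have hvolA : ENNReal.ofReal ((y k / 2) ^ n * Cr - (y k / 4) ^ n * Cr)
        ≤ volume (A k) := by
      have hsub2 : Metric.ball (0 : EuclideanSpace ℝ (Fin n)) (y k / 2) \
          Metric.closedBall 0 (y k / 4) ⊆ A k := by
        rintro x ⟨hx1, hx2⟩
        rw [Metric.mem_ball, dist_zero_right] at hx1
        rw [Metric.mem_closedBall, dist_zero_right] at hx2
        exact ⟨(not_le.mp hx2).le, hx1⟩
      have hdiff : volume (Metric.ball (0 : EuclideanSpace ℝ (Fin n)) (y k / 2) \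
          Metric.closedBall 0 (y k / 4))
          = volume (Metric.ball (0 : EuclideanSpace ℝ (Fin n)) (y k / 2))
            - volume (Metric.closedBall (0 : EuclideanSpace ℝ (Fin n)) (y k / 4)) := by
        apply measure_diff (Metric.closedBall_subset_ball (by linarith))
          measurableSet_closedBall.nullMeasurableSet measure_closedBall_lt_top.ne
      refine le_trans ?_ (measure_mono hsub2)
      rw [hdiff, EuclideanSpace.volume_ball, EuclideanSpace.volume_closedBall,
        Fintype.card_fin, ← ENNReal.ofReal_pow (by positivity),
        ← ENNReal.ofReal_pow (by positivity), ← ENNReal.ofReal_mul (by positivity),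
        ← ENNReal.ofReal_mul (by positivity), ← ENNReal.ofReal_sub _ (by positivity)]
    -- measure of box
    have hb1 : ENNReal.ofReal (Real.exp (2 * r * (σ + (k:ℝ)))) * volume (A k) ≤ μ (B k) := by
      have hvolB : volume (B k) = volume (A k) := by
        rw [hB_def]
        simp only
        rw [Measure.volume_eq_prod _ _, Measure.prod_prod, Real.volume_Ico]
        norm_num
      rw [hμ_def, withDensity_apply _ (hmeasB k)]
      calc ENNReal.ofReal (Real.exp (2 * r * (σ + (k:ℝ)))) * volume (A k)
          = ENNReal.ofReal (Real.exp (2 * r * (σ + (k:ℝ)))) * volume (B k) := by rw [hvolB]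
        _ = ∫⁻ _ in B k, ENNReal.ofReal (Real.exp (2 * r * (σ + (k:ℝ)))) ∂volume :=
            (setLIntegral_const _ _).symm
        _ ≤ ∫⁻ H in B k, ENNReal.ofReal (Real.exp (2 * r * H.2)) ∂volume := by
            apply setLIntegral_mono (by fun_prop)
            intro H hH
            obtain ⟨_, hs1, _⟩ := hH
            apply ENNReal.ofReal_le_ofReal
            apply Real.exp_le_exp.2
            nlinarith [mul_le_mul_of_nonneg_left hs1 (by linarith : (0:ℝ) ≤ 2 * r)]
    -- the real identity
    have hkey : t * Real.exp (2 * r * (σ + (k:ℝ)))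
        * ((y k / 2) ^ n * Cr - (y k / 4) ^ n * Cr) = c := by
      have h2 : Real.exp (2 * r * (σ + (k:ℝ))) * Real.exp (-(2 * r * (σ + (k:ℝ) + 1)))
          = Real.exp (-(2 * r)) := by
        rw [← Real.exp_add]; congr 1; ring
      calc t * Real.exp (2 * r * (σ + (k:ℝ))) * ((y k / 2) ^ n * Cr - (y k / 4) ^ n * Cr)
          = (t * y k ^ n) * Real.exp (2 * r * (σ + (k:ℝ)))
            * ((((1:ℝ)/2) ^ n - ((1:ℝ)/4) ^ n) * Cr) := by
            simp only [div_pow, one_pow]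
            ring
        _ = (Real.exp (2 * r * (σ + (k:ℝ))) * Real.exp (-(2 * r * (σ + (k:ℝ) + 1))))
            * ((((1:ℝ)/2) ^ n - ((1:ℝ)/4) ^ n) * Cr) := by rw [hid k]; ring
        _ = c := by rw [h2, hc_def]; ring
    calc ENNReal.ofReal c
        = ENNReal.ofReal t * (ENNReal.ofReal (Real.exp (2 * r * (σ + (k:ℝ))))
            * ENNReal.ofReal ((y k / 2) ^ n * Cr - (y k / 4) ^ n * Cr)) := by
          rw [← ENNReal.ofReal_mul (by positivity), ← ENNReal.ofReal_mul (by positivity),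
            ← mul_assoc, hkey]
      _ ≤ ENNReal.ofReal t * (ENNReal.ofReal (Real.exp (2 * r * (σ + (k:ℝ))))
            * volume (A k)) := by gcongr
      _ ≤ ENNReal.ofReal t * μ (B k) := by
          exact mul_le_mul_right hb1 _
  -- assemble
  calc b < ENNReal.ofReal (K * c) := hK
    _ = (K : ENNReal) * ENNReal.ofReal c := by
        rw [ENNReal.ofReal_mul (Nat.cast_nonneg K), ENNReal.ofReal_natCast]
    _ = ∑ k ∈ Finset.range K, ENNReal.ofReal c := by
        rw [Finset.sum_const, Finset.card_range, nsmul_eq_mul]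
    _ ≤ ∑ k ∈ Finset.range K, ENNReal.ofReal t * μ (B k) := Finset.sum_le_sum hbox
    _ = ENNReal.ofReal t * ∑ k ∈ Finset.range K, μ (B k) := by rw [Finset.mul_sum]
    _ = ENNReal.ofReal t * μ (⋃ k ∈ Finset.range K, B k) := by
        rw [measure_biUnion_finset hdisj (fun k _ => hmeasB k)]
    _ ≤ ENNReal.ofReal t * μ S := by
        apply mul_le_mul_right
        apply measure_mono
        exact Set.iUnion₂_subset fun k hk => hsub k (Finset.mem_range.mp hk)
end

section
/- Let u ∈ ℝ \ {0}, ℓ ≥ 2, and Q(ζ) = ⟨ζ,ζ⟩ + ⟨ρ,ρ⟩ on the complexification of ℝ^ℓ with bilinear extension, ρ ≠ 0. Consider m(ζ) = Q(ζ)^{iu} (principal branch, defined where Q(ζ) ∉ (-∞, 0]). Then the function ξ ↦ |ξ| · |∂_{ζ_ℓ} m(ξ + iρ)|, where ζ_ℓ is the coordinate along ρ/|ρ|, is unbounded as ξ → 0 with ξ ⊥ ρ: indeed in that limit it equals 2|u| |ξ| |ρ| / |ξ|² · e^{-u·arg Q(ξ+iρ)} up to the bounded factor, which tends to ∞. -/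
open Real Filter

lemma stmt18_aux (ℓ : ℕ) (r u : ℝ) (hr : 0 < r)
    (ξ : EuclideanSpace ℝ (Fin (ℓ + 2))) (h0 : ξ (Fin.last (ℓ + 1)) = 0) (hne : ξ ≠ 0) :
    ‖ξ‖ *
      Norm.norm
        (fderiv ℂ
          (fun ζ : Fin (ℓ + 2) → ℂ =>
            (∑ j, ζ j ^ 2 + ((r ^ 2 : ℝ) : ℂ)) ^ (Complex.I * (u : ℂ)))
          (fun j => (ξ j : ℂ) + if j = Fin.last (ℓ + 1) then (r : ℂ) * Complex.I else 0)
          (Pi.single (Fin.last (ℓ + 1)) 1)) = 2 * |u| * r / ‖ξ‖ := by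
  set k := Fin.last (ℓ + 1) with hk
  set ζ₀ : Fin (ℓ + 2) → ℂ :=
    fun j => (ξ j : ℂ) + if j = k then (r : ℂ) * Complex.I else 0 with hζ₀
  have hζk : ζ₀ k = (r : ℂ) * Complex.I := by simp [hζ₀, h0]
  have hζj : ∀ j, j ≠ k → ζ₀ j = (ξ j : ℂ) := by intro j hj; simp [hζ₀, hj]
  have ht : 0 < ‖ξ‖ := norm_pos_iff.2 hne
  have hnorm : (‖ξ‖ : ℝ) ^ 2 = ∑ j, ξ j ^ 2 := by
    rw [EuclideanSpace.norm_eq]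
    rw [Real.sq_sqrt (by positivity)]
    simp [sq_abs]
  -- value of Q at ζ₀
  have hQval : (∑ j, ζ₀ j ^ 2 + ((r ^ 2 : ℝ) : ℂ)) = ((‖ξ‖ ^ 2 : ℝ) : ℂ) := by
    rw [Fin.sum_univ_castSucc]
    have h1 : ∀ i : Fin (ℓ + 1), ζ₀ i.castSucc = (ξ i.castSucc : ℂ) := by
      intro i; exact hζj _ (Fin.castSucc_lt_last i).ne
    simp only [h1, hζk, hk]
    have h3 : ((‖ξ‖ ^ 2 : ℝ) : ℂ) = ∑ j, ((ξ j : ℝ) : ℂ) ^ 2 := by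
      push_cast [hnorm]; ring
    have h2 : (∑ j, ((ξ j : ℝ) : ℂ) ^ 2) = ∑ i : Fin (ℓ + 1), ((ξ i.castSucc : ℝ) : ℂ) ^ 2 := by
      rw [Fin.sum_univ_castSucc]
      simp [← hk, h0]
    rw [h3, h2]
    have : ((r : ℂ) * Complex.I) ^ 2 = -((r : ℂ) ^ 2) := by
      rw [mul_pow, Complex.I_sq]; ring
    rw [show ζ₀ (Fin.last (ℓ + 1)) = (r : ℂ) * Complex.I from hζk, this]
    push_cast
    ring
  -- derivative of Q
  set L : (Fin (ℓ + 2) → ℂ) →L[ℂ] ℂ :=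
    ∑ j, (2 * ζ₀ j) • (ContinuousLinearMap.proj j : (Fin (ℓ + 2) → ℂ) →L[ℂ] ℂ) with hL
  have hQ : HasFDerivAt (fun ζ : Fin (ℓ + 2) → ℂ => ∑ j, ζ j ^ 2 + ((r ^ 2 : ℝ) : ℂ)) L ζ₀ := by
    refine HasFDerivAt.add_const _ ?_
    refine HasFDerivAt.fun_sum fun j _ => ?_
    have hp : HasFDerivAt (fun ζ : Fin (ℓ + 2) → ℂ => ζ j)
        (ContinuousLinearMap.proj j : (Fin (ℓ + 2) → ℂ) →L[ℂ] ℂ) ζ₀ :=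
      (ContinuousLinearMap.proj j : (Fin (ℓ + 2) → ℂ) →L[ℂ] ℂ).hasFDerivAt
    convert hp.mul hp using 1
    · ext ζ; ring
    · ext v; simp; ring
    · rw [two_mul]; exact add_smul _ _ _
  have hmem : (∑ j, ζ₀ j ^ 2 + ((r ^ 2 : ℝ) : ℂ)) ∈ Complex.slitPlane := by
    rw [hQval]
    exact Complex.ofReal_mem_slitPlane.2 (by positivity)
  have hF := hQ.cpow (hasFDerivAt_const (Complex.I * (u : ℂ)) ζ₀) hmem
  rw [hF.fderiv]
  have hLv : L (Pi.single k 1) = 2 * ((r : ℂ) * Complex.I) := by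
    rw [hL]
    simp only [ContinuousLinearMap.sum_apply, ContinuousLinearMap.smul_apply,
      ContinuousLinearMap.proj_apply, smul_eq_mul]
    rw [Finset.sum_eq_single k]
    · simp [hζk]
    · intro j _ hj; simp [Pi.single_eq_of_ne hj]
    · simp
  have habs : Norm.norm ((Complex.I * (u : ℂ) * (∑ j, ζ₀ j ^ 2 + ((r ^ 2 : ℝ) : ℂ)) ^
        (Complex.I * (u : ℂ) - 1)) * (2 * ((r : ℂ) * Complex.I)))
      = |u| * (‖ξ‖ ^ 2)⁻¹ * (2 * r) := by
    rw [hQval]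
    rw [norm_mul, norm_mul, norm_mul, norm_mul, norm_mul]
    rw [Complex.norm_cpow_eq_rpow_re_of_pos (by positivity)]
    have : (Complex.I * (u : ℂ) - 1).re = -1 := by simp
    rw [this, Real.rpow_neg_one]
    simp [Complex.norm_real, abs_of_pos hr]
  simp only [ContinuousLinearMap.add_apply, ContinuousLinearMap.smul_apply, smul_eq_mul,
    ContinuousLinearMap.zero_apply, mul_zero, add_zero, hLv]
  rw [habs]
  field_simp

/-- Remark 2.2: for the imaginary-power multiplier `m(ζ) = Q(ζ)^{iu}` with
`Q(ζ) = Σ ζ_j² + |ρ|²` (here `ρ = r·e_last`, `r > 0`), the function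
`ξ ↦ |ξ| · |∂_{ζ_last} m(ξ + iρ)|` is unbounded as `ξ → 0` with `ξ ⊥ ρ` (ξ_last = 0);
in fact it tends to `+∞`, so the isotropic Mihlin–Hörmander condition fails in rank ≥ 2. -/
theorem stmt18 (ℓ : ℕ) (r u : ℝ) (hr : 0 < r) (hu : u ≠ 0) :
    Tendsto
      (fun ξ : EuclideanSpace ℝ (Fin (ℓ + 2)) =>
        ‖ξ‖ *
          Norm.norm
            (fderiv ℂ
              (fun ζ : Fin (ℓ + 2) → ℂ =>
                (∑ j, ζ j ^ 2 + ((r ^ 2 : ℝ) : ℂ)) ^ (Complex.I * (u : ℂ)))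
              (fun j => (ξ j : ℂ) + if j = Fin.last (ℓ + 1) then (r : ℂ) * Complex.I else 0)
              (Pi.single (Fin.last (ℓ + 1)) 1)))
      (nhdsWithin 0
        {ξ : EuclideanSpace ℝ (Fin (ℓ + 2)) | ξ (Fin.last (ℓ + 1)) = 0 ∧ ξ ≠ 0})
      atTop := by
  set S := {ξ : EuclideanSpace ℝ (Fin (ℓ + 2)) | ξ (Fin.last (ℓ + 1)) = 0 ∧ ξ ≠ 0}
  have hEq : (fun ξ : EuclideanSpace ℝ (Fin (ℓ + 2)) => 2 * |u| * r / ‖ξ‖)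
      =ᶠ[nhdsWithin 0 S]
      (fun ξ : EuclideanSpace ℝ (Fin (ℓ + 2)) =>
        ‖ξ‖ *
          Norm.norm
            (fderiv ℂ
              (fun ζ : Fin (ℓ + 2) → ℂ =>
                (∑ j, ζ j ^ 2 + ((r ^ 2 : ℝ) : ℂ)) ^ (Complex.I * (u : ℂ)))
              (fun j => (ξ j : ℂ) + if j = Fin.last (ℓ + 1) then (r : ℂ) * Complex.I else 0)
              (Pi.single (Fin.last (ℓ + 1)) 1))) := by
    filter_upwards [self_mem_nhdsWithin] with ξ hξ
    exact (stmt18_aux ℓ r u hr ξ hξ.1 hξ.2).symm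
  refine Tendsto.congr' hEq ?_
  have hnorm : Tendsto (fun ξ : EuclideanSpace ℝ (Fin (ℓ + 2)) => ‖ξ‖)
      (nhdsWithin 0 S) (nhdsWithin 0 (Set.Ioi 0)) := by
    rw [tendsto_nhdsWithin_iff]
    constructor
    · exact (continuous_norm.tendsto' 0 0 norm_zero).mono_left nhdsWithin_le_nhds
    · filter_upwards [self_mem_nhdsWithin] with ξ hξ
      exact norm_pos_iff.2 hξ.2
  have h2 : Tendsto (fun t : ℝ => 2 * |u| * r / t) (nhdsWithin 0 (Set.Ioi 0)) atTop := by
    have h3 := tendsto_inv_nhdsGT_zero.const_mul_atTop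
      (by positivity : (0 : ℝ) < 2 * |u| * r)
    simpa [div_eq_mul_inv] using h3
  exact h2.comp hnorm
end
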